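/- arXiv:1510.00426 — 4 statements merged into one kernel-verified Lean document; each statement's English description precedes it below -/
import Mathlib

section
/- Let f : X → Y be a morphism in a triangulated category that admits a pseudo-inverse, i.e., a morphism g : Y → X with f ∘ g ∘ f = f. Then the cone of f is a retract (direct summand) of Y ⊕ ΣX. -/
open CategoryTheory CategoryTheory.Limits CategoryTheory.Pretriangulated

universe v u

/-- If a morphism `f : X ⟶ Y` in a (pre)triangulated category admits a
pseudo-inverse `g` (i.e. `f ≫ g ≫ f = f`), then any cone of `f` is a retract of
`Y ⊞ X⟦1⟧`. -/
theorem cone_retract_of_pseudo_inverse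
    {C : Type u} [Category.{v} C] [Preadditive C] [HasZeroObject C]
    [HasShift C ℤ] [∀ n : ℤ, (CategoryTheory.shiftFunctor C n).Additive]
    [Pretriangulated C] [HasBinaryBiproducts C]
    {X Y : C} (f : X ⟶ Y) (g : Y ⟶ X) (hpseudo : f ≫ g ≫ f = f)
    {Z : C} (u : Y ⟶ Z) (v : Z ⟶ X⟦(1 : ℤ)⟧)
    (hdist : Triangle.mk f u v ∈ distTriang C) :
    ∃ (i : Z ⟶ Y ⊞ X⟦(1 : ℤ)⟧) (r : Y ⊞ X⟦(1 : ℤ)⟧ ⟶ Z), i ≫ r = 𝟙 Z := by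
  have hfu : f ≫ u = 0 := comp_distTriang_mor_zero₁₂ _ hdist
  have h1 : f ≫ (𝟙 Y - g ≫ f) = 0 := by
    simp [Preadditive.comp_sub, hpseudo]
  obtain ⟨ψ, hψ⟩ := Triangle.yoneda_exact₂ _ hdist (𝟙 Y - g ≫ f) h1
  change Z ⟶ Y at ψ
  change 𝟙 Y - g ≫ f = u ≫ ψ at hψ
  have h2 : u ≫ (𝟙 Z - ψ ≫ u) = 0 := by
    have : u ≫ ψ ≫ u = u - g ≫ f ≫ u := by
      rw [← Category.assoc, ← hψ]
      simp [Preadditive.sub_comp]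
    simp [Preadditive.comp_sub, this, hfu]
  obtain ⟨w, hw⟩ := Triangle.yoneda_exact₃ _ hdist (𝟙 Z - ψ ≫ u) h2
  change X⟦(1 : ℤ)⟧ ⟶ Z at w
  change 𝟙 Z - ψ ≫ u = v ≫ w at hw
  refine ⟨biprod.lift ψ v, biprod.desc u w, ?_⟩
  simp only [biprod.lift_desc]
  rw [← hw]
  abel
end

section
/- Let R be a two-sided noetherian ring such that the category Mod R of right R-modules is Gorenstein (every object has finite projective dimension iff it has finite injective dimension, the finitary projective and injective dimensions of Mod R are finite, and Mod R has a generator of finite projective dimension). Then R is Iwanaga-Gorenstein, i.e., R has finite self-injective dimension as a left module and as a right module. -/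
open CategoryTheory CategoryTheory.Limits

universe v u

namespace Stmt1

variable {A : Type u} [Category.{v} A] [Abelian A]

/-- `PdimLE n M` : `M` has projective dimension at most `n`. -/
def PdimLE : ℕ → A → Prop
  | 0, M => Projective M
  | n + 1, M => Projective M ∨
      ∃ (K P : A) (i : K ⟶ P) (p : P ⟶ M) (w : i ≫ p = 0),
        Projective P ∧ (ShortComplex.mk i p w).ShortExact ∧ PdimLE n K

/-- `IdimLE n M` : `M` has injective dimension at most `n`. -/
def IdimLE : ℕ → A → Prop
  | 0, M => Injective M
  | n + 1, M => Injective M ∨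
      ∃ (I K : A) (i : M ⟶ I) (p : I ⟶ K) (w : i ≫ p = 0),
        Injective I ∧ (ShortComplex.mk i p w).ShortExact ∧ IdimLE n K

/-- `M` has finite projective dimension. -/
def FinPdim (M : A) : Prop := ∃ n, PdimLE n M

/-- `M` has finite injective dimension. -/
def FinIdim (M : A) : Prop := ∃ n, IdimLE n M

/-- An abelian category is *Gorenstein* if finiteness of projective dimension and of
injective dimension agree objectwise, the finitary projective and injective dimensions
are finite, and there is a generator of finite projective dimension. -/
def IsGorenstein (A : Type u) [Category.{v} A] [Abelian A] : Prop :=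
  (∀ M : A, FinPdim M ↔ FinIdim M) ∧
  (∃ n : ℕ, (∀ M : A, FinPdim M → PdimLE n M) ∧ (∀ M : A, FinIdim M → IdimLE n M)) ∧
  (∃ G : A, IsSeparator G ∧ FinPdim G)

end Stmt1

open Stmt1

namespace IwGor
variable {R : Type u} [Ring R]





local notation "𝔻" => AddCircle (1 : ℚ)

/-- Right (`Rᵐᵒᵖ`) module structure on the character module of a left `R`-module. -/
instance charLMod (M : Type u) [AddCommGroup M] [Module R M] :
    Module Rᵐᵒᵖ (CharacterModule M) where
  smul a c := c.comp (DistribMulAction.toAddMonoidHom M a.unop)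
  one_smul c := by
    ext m
    show c ((1 : Rᵐᵒᵖ).unop • m) = c m
    simp
  mul_smul a b c := by
    ext m
    show c ((a * b).unop • m) = c (b.unop • a.unop • m)
    rw [MulOpposite.unop_mul, mul_smul]
  smul_zero a := rfl
  smul_add a c c' := rfl
  add_smul a b c := by
    ext m
    show c ((a + b).unop • m) = c (a.unop • m) + c (b.unop • m)
    rw [MulOpposite.unop_add, add_smul, map_add]
  zero_smul c := by
    ext m
    show c ((0 : Rᵐᵒᵖ).unop • m) = 0
    simp

lemma charL_smul {M : Type u} [AddCommGroup M] [Module R M]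
    (a : Rᵐᵒᵖ) (c : CharacterModule M) (m : M) : (a • c) m = c (a.unop • m) := rfl

/-- Left module structure on the character module of a right (`Rᵐᵒᵖ`) module. -/
instance charRMod (M : Type u) [AddCommGroup M] [Module Rᵐᵒᵖ M] :
    Module R (CharacterModule M) where
  smul r c := c.comp (DistribMulAction.toAddMonoidHom M (MulOpposite.op r))
  one_smul c := by ext m; show c ((MulOpposite.op (1:R)) • m) = c m; simp
  mul_smul a b c := by
    ext m
    show c (MulOpposite.op (a * b) • m) = c (MulOpposite.op b • MulOpposite.op a • m)
    rw [smul_smul, ← MulOpposite.op_mul]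
  smul_zero a := rfl
  smul_add a c c' := rfl
  add_smul a b c := by
    ext m
    show c (MulOpposite.op (a + b) • m) = c (MulOpposite.op a • m) + c (MulOpposite.op b • m)
    rw [MulOpposite.op_add, add_smul, map_add]
  zero_smul c := by
    ext m
    show c (MulOpposite.op (0:R) • m) = 0
    simp

lemma charR_smul {M : Type u} [AddCommGroup M] [Module Rᵐᵒᵖ M]
    (r : R) (c : CharacterModule M) (m : M) : (r • c) m = c (MulOpposite.op r • m) := rfl

/-- Extension of characters along an injective additive map. -/
lemma char_extend {A B : Type u} [AddCommGroup A] [AddCommGroup B]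
    (f : A →+ B) (hf : Function.Injective f) (c : CharacterModule A) :
    ∃ C : CharacterModule B, ∀ a, C (f a) = c a := by
  obtain ⟨C, hC⟩ := CharacterModule.dual_surjective_of_injective f.toIntLinearMap hf c
  exact ⟨C, fun a => congrFun (congrArg DFunLike.coe hC) a⟩


section helpers
variable {S : Type u} [Ring S]

/-- factor a map killing `ker δ` through `δ`, into an injective module -/
lemma factor_extend {Y Z J : Type u} [AddCommGroup Y] [AddCommGroup Z] [AddCommGroup J]
    [Module S Y] [Module S Z] [Module S J] (hJ : Module.Injective S J)
    (δ : Y →ₗ[S] Z) (f : Y →ₗ[S] J) (h : LinearMap.ker δ ≤ LinearMap.ker f) :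
    ∃ Θ : Z →ₗ[S] J, Θ ∘ₗ δ = f := by
  set e := LinearMap.quotKerEquivRange δ
  set fbar := Submodule.liftQ (LinearMap.ker δ) f h
  obtain ⟨Θ, hΘ⟩ := hJ.out (LinearMap.range δ).subtype (Submodule.injective_subtype _)
    (fbar ∘ₗ (e.symm : LinearMap.range δ →ₗ[S] Y ⧸ LinearMap.ker δ))
  refine ⟨Θ, ?_⟩
  ext y
  have h1 : e (Submodule.Quotient.mk y) = ⟨δ y, LinearMap.mem_range_self δ y⟩ :=
    Subtype.ext (LinearMap.quotKerEquivRange_apply_mk δ y)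
  have h2 : e.symm ⟨δ y, LinearMap.mem_range_self δ y⟩ = Submodule.Quotient.mk y := by
    rw [← h1, LinearEquiv.symm_apply_apply]
  have := hΘ ⟨δ y, LinearMap.mem_range_self δ y⟩
  simpa [h2, fbar] using this

/-- pull a map back through an injection whose range contains the range of the map -/
lemma pull_back {X A B : Type u} [AddCommGroup X] [AddCommGroup A] [AddCommGroup B]
    [Module S X] [Module S A] [Module S B]
    (α : A →ₗ[S] B) (hα : Function.Injective α) (f : X →ₗ[S] B)
    (h : LinearMap.range f ≤ LinearMap.range α) :
    ∃ g : X →ₗ[S] A, α ∘ₗ g = f := by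
  set e := LinearEquiv.ofInjective α hα
  refine ⟨(e.symm : LinearMap.range α →ₗ[S] A) ∘ₗ
    (f.codRestrict (LinearMap.range α) (fun x => h (LinearMap.mem_range_self f x))), ?_⟩
  ext x
  show α (e.symm ⟨f x, _⟩) = f x
  obtain ⟨a, ha⟩ := h (LinearMap.mem_range_self f x)
  have : (⟨f x, h (LinearMap.mem_range_self f x)⟩ : LinearMap.range α) = e a := by
    apply Subtype.ext; exact ha.symm
  rw [this, LinearEquiv.symm_apply_apply]
  simpa [e, LinearEquiv.ofInjective] using ha

end helpers

/-- evaluation map into the double transpose -/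
def ev (F : Type u) [AddCommGroup F] [Module R F] (f : F) :
    (F →ₗ[R] R) →ₗ[Rᵐᵒᵖ] R where
  toFun ψ := ψ f
  map_add' _ _ := rfl
  map_smul' _ _ := rfl

/-- Properties of nodes in our free resolutions. -/
structure Good (F : Type u) [AddCommGroup F] [Module R F] : Prop where
  proj : Module.Projective R F
  tproj : Module.Projective Rᵐᵒᵖ (F →ₗ[R] R)
  tfg : ∃ (k : ℕ) (g : Fin k → (F →ₗ[R] R)),
      Submodule.span Rᵐᵒᵖ (Set.range g) = ⊤
  ev_surj : ∀ Φ : (F →ₗ[R] R) →ₗ[Rᵐᵒᵖ] R, ∃ f : F, ev F f = Φ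
  sep : ∀ f : F, (∀ ψ : F →ₗ[R] R, ψ f = 0) → f = 0

lemma good_R : Good (R := R) R := by
  constructor
  · infer_instance
  · -- (R →ₗ[R] R) ≃ₗ[Rᵐᵒᵖ] Rᵐᵒᵖ
    have e : (R →ₗ[R] R) ≃ₗ[Rᵐᵒᵖ] Rᵐᵒᵖ :=
      { toFun := fun ψ => MulOpposite.op (ψ 1)
        map_add' := fun ψ χ => by simp
        map_smul' := fun a ψ => by
          simp only [LinearMap.smul_apply, RingHom.id_apply]
          rw [MulOpposite.smul_eq_mul_unop]
          simp [MulOpposite.op_mul]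
        invFun := fun a => a • LinearMap.id
        left_inv := fun ψ => by
          refine LinearMap.ext fun r => ?_
          show LinearMap.id r * (MulOpposite.op (ψ 1)).unop = ψ r
          simp only [LinearMap.id_coe, id_eq, MulOpposite.unop_op]
          conv_rhs => rw [show r = r • (1:R) by simp, map_smul]
          simp [smul_eq_mul]
        right_inv := fun a => by
          show MulOpposite.op ((a • LinearMap.id) (1:R)) = a
          show MulOpposite.op (LinearMap.id (1:R) * a.unop) = a
          simp }
    exact Module.Projective.of_equiv e.symm
  · refine ⟨1, fun _ => LinearMap.id, ?_⟩
    rw [eq_top_iff]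
    intro ψ _
    have : ψ = MulOpposite.op (ψ 1) • LinearMap.id := by
      refine LinearMap.ext fun r => ?_
      show ψ r = LinearMap.id r * ψ 1
      conv_lhs => rw [show r = r • (1:R) by simp, map_smul]
      simp [smul_eq_mul]
    rw [this]
    exact Submodule.smul_mem _ _ (Submodule.subset_span ⟨0, rfl⟩)
  · intro Φ
    refine ⟨Φ LinearMap.id, ?_⟩
    ext ψ
    show ψ (Φ LinearMap.id) = Φ ψ
    have : ψ = MulOpposite.op (ψ 1) • LinearMap.id := by
      refine LinearMap.ext fun r => ?_
      show ψ r = LinearMap.id r * ψ 1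
      conv_lhs => rw [show r = r • (1:R) by simp, map_smul]
      simp [smul_eq_mul]
    rw [this, map_smul]
    show (Φ LinearMap.id) * ψ 1 = _
    rfl
  · intro f h
    simpa using h LinearMap.id


/-- standard basis vector -/
def sbv (k : ℕ) (i : Fin k) : Fin k → R := fun j => if i = j then 1 else 0

lemma expand_psi {k : ℕ} (ψ : (Fin k → R) →ₗ[R] R) :
    ψ = ∑ i : Fin k, MulOpposite.op (ψ (sbv k i)) • LinearMap.proj i := by
  refine LinearMap.ext fun f => ?_
  have hf : f = ∑ i : Fin k, f i • sbv k i := pi_eq_sum_univ f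
  conv_lhs => rw [hf]
  rw [map_sum]
  rw [LinearMap.sum_apply]
  refine Finset.sum_congr rfl fun i _ => ?_
  rw [map_smul]
  show f i • ψ (sbv k i) = (LinearMap.proj i : (Fin k → R) →ₗ[R] R) f * ψ (sbv k i)
  rfl

lemma good_free (k : ℕ) : Good (R := R) (Fin k → R) := by
  constructor
  · exact Module.Projective.of_basis (Pi.basisFun R (Fin k))
  · have e : ((Fin k → R) →ₗ[R] R) ≃ₗ[Rᵐᵒᵖ] (Fin k → Rᵐᵒᵖ) :=
      { toFun := fun ψ i => MulOpposite.op (ψ (sbv k i))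
        map_add' := fun ψ χ => by funext i; simp [MulOpposite.op_add]
        map_smul' := fun a ψ => by
          funext i
          show MulOpposite.op ((a • ψ) (sbv k i)) = (a • fun i => MulOpposite.op (ψ (sbv k i))) i
          show MulOpposite.op (ψ (sbv k i) * a.unop) = a * MulOpposite.op (ψ (sbv k i))
          rw [MulOpposite.op_mul, MulOpposite.op_unop]
        invFun := fun g => ∑ i : Fin k, g i • (LinearMap.proj i : (Fin k → R) →ₗ[R] R)
        left_inv := fun ψ => (expand_psi ψ).symm
        right_inv := fun g => by
          funext i
          show MulOpposite.op ((∑ j : Fin k, g j • (LinearMap.proj j : (Fin k → R) →ₗ[R] R))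
            (sbv k i)) = g i
          rw [LinearMap.sum_apply]
          have : ∀ j : Fin k, (g j • (LinearMap.proj j : (Fin k → R) →ₗ[R] R)) (sbv k i)
              = sbv k i j * (g j).unop := fun j => rfl
          simp_rw [this]
          rw [Finset.sum_eq_single i]
          · simp [sbv]
          · intro j _ hji
            simp [sbv, Ne.symm hji]
          · intro h; exact absurd (Finset.mem_univ i) h }
    exact Module.Projective.of_equiv e.symm
  · refine ⟨k, fun i => LinearMap.proj i, ?_⟩
    rw [eq_top_iff]
    intro ψ _
    rw [expand_psi ψ]
    exact Submodule.sum_mem _ fun i _ =>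
      Submodule.smul_mem _ _ (Submodule.subset_span ⟨i, rfl⟩)
  · intro Φ
    refine ⟨fun i => Φ (LinearMap.proj i), ?_⟩
    refine LinearMap.ext fun ψ => ?_
    show ψ (fun i => Φ (LinearMap.proj i)) = Φ ψ
    conv_rhs => rw [expand_psi ψ, map_sum]
    have : ∀ i : Fin k, Φ (MulOpposite.op (ψ (sbv k i)) • LinearMap.proj i)
        = Φ (LinearMap.proj i) * ψ (sbv k i) := by
      intro i
      rw [map_smul]
      rfl
    simp_rw [this]
    conv_lhs => rw [show (fun i => Φ (LinearMap.proj i)) = ∑ i : Fin k,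
      (Φ (LinearMap.proj i)) • sbv k i from pi_eq_sum_univ _, map_sum]
    refine Finset.sum_congr rfl fun i _ => ?_
    rw [map_smul]
    rfl
  · intro f h
    funext i
    exact h (LinearMap.proj i)


section Tower
variable [IsNoetherianRing R]

/-- choose a finite free cover of a fin. gen. submodule -/
noncomputable def cover {M : Type u} [AddCommGroup M] [Module R M] (K : Submodule R M)
    (hK : K.FG) : Σ k : ℕ, { f : (Fin k → R) →ₗ[R] M // LinearMap.range f = K } := by
  have h := Submodule.fg_iff_exists_fin_generating_family.mp hK
  refine ⟨h.choose, Fintype.linearCombination R h.choose_spec.choose, ?_⟩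
  rw [Fintype.range_linearCombination]
  exact h.choose_spec.choose_spec

variable (I : Ideal R)

/-- the tower of syzygies of `R/I`: at each level, the size of the free module
and the next submodule to be resolved. -/
noncomputable def twseq : ℕ → Σ k : ℕ, Submodule R (Fin k → R)
  | 0 => ⟨(cover I (IsNoetherian.noetherian I)).1,
      LinearMap.ker (cover I (IsNoetherian.noetherian I)).2.1⟩
  | (m+1) => ⟨(cover (twseq m).2 (IsNoetherian.noetherian _)).1,
      LinearMap.ker (cover (twseq m).2 (IsNoetherian.noetherian _)).2.1⟩

/-- bottom differential -/
noncomputable def d0 : (Fin (twseq I 0).1 → R) →ₗ[R] R :=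
  (cover I (IsNoetherian.noetherian I)).2.1

/-- higher differentials -/
noncomputable def dmap (m : ℕ) : (Fin (twseq I (m+1)).1 → R) →ₗ[R] (Fin (twseq I m).1 → R) :=
  (cover (twseq I m).2 (IsNoetherian.noetherian _)).2.1

lemma range_d0 : LinearMap.range (d0 I) = I :=
  (cover I (IsNoetherian.noetherian I)).2.2

lemma range_dmap (m : ℕ) : LinearMap.range (dmap I m) = (twseq I m).2 :=
  (cover (twseq I m).2 (IsNoetherian.noetherian _)).2.2

lemma ker_d0 : LinearMap.ker (d0 I) = (twseq I 0).2 := rfl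

lemma ker_dmap (m : ℕ) : LinearMap.ker (dmap I m) = (twseq I (m+1)).2 := rfl

/-- nodes of the augmented complex: `N 0 = R`, `N (m+1) = F m`. -/
def Nd : ℕ → Type u
  | 0 => R
  | (m+1) => Fin (twseq I m).1 → R

noncomputable instance NdAcg : ∀ m, AddCommGroup (Nd I m)
  | 0 => inferInstanceAs (AddCommGroup R)
  | (m+1) => inferInstanceAs (AddCommGroup (Fin _ → R))

noncomputable instance NdMod : ∀ m, Module R (Nd I m)
  | 0 => inferInstanceAs (Module R R)
  | (m+1) => inferInstanceAs (Module R (Fin _ → R))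

/-- differentials of the augmented complex -/
noncomputable def Dd : ∀ m, Nd I (m+1) →ₗ[R] Nd I m
  | 0 => d0 I
  | (m+1) => dmap I m

lemma good_Nd : ∀ m, Good (R := R) (Nd I m)
  | 0 => good_R
  | (m+1) => good_free _

lemma range_Dd_zero : LinearMap.range (Dd I 0) = I := range_d0 I

lemma exact_Nd : ∀ m, LinearMap.range (Dd I (m+1)) = LinearMap.ker (Dd I m)
  | 0 => (range_dmap I 0).trans (ker_d0 I).symm
  | (m+1) => (range_dmap I (m+1)).trans (ker_dmap I m).symm

lemma Dd_comp_zero (m : ℕ) : (Dd I m) ∘ₗ (Dd I (m+1)) = 0 := by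
  refine LinearMap.ext fun x => ?_
  have : Dd I (m+1) x ∈ LinearMap.ker (Dd I m) := by
    rw [← exact_Nd I m]; exact LinearMap.mem_range_self _ x
  simpa using this

/-- transpose of a linear map -/
def tp {X Y : Type u} [AddCommGroup X] [AddCommGroup Y] [Module R X] [Module R Y]
    (δ : X →ₗ[R] Y) : (Y →ₗ[R] R) →ₗ[Rᵐᵒᵖ] (X →ₗ[R] R) where
  toFun ψ := ψ ∘ₗ δ
  map_add' _ _ := rfl
  map_smul' _ _ := rfl

/-- the key extension property on the `Ext` side ("`Ext^{k+1}(R/I, M) = 0`"). -/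
def Eh (M : Type u) [AddCommGroup M] [Module R M] (k : ℕ) : Prop :=
  ∀ φ : Nd I (k+1) →ₗ[R] M, φ ∘ₗ Dd I (k+1) = 0 →
    ∃ ψ : Nd I k →ₗ[R] M, ψ ∘ₗ Dd I k = φ

/-- the key exactness property on the `Tor` side ("`Tor_{m+1}(A, R/I) = 0`"). -/
def Qh (A : Type u) [AddCommGroup A] [Module Rᵐᵒᵖ A] (m : ℕ) : Prop :=
  ∀ x : (Nd I (m+1) →ₗ[R] R) →ₗ[Rᵐᵒᵖ] A, x ∘ₗ tp (Dd I m) = 0 →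
    ∃ y : (Nd I (m+2) →ₗ[R] R) →ₗ[Rᵐᵒᵖ] A, y ∘ₗ tp (Dd I (m+1)) = x

end Tower
section Qside
variable [IsNoetherianRing R] (I : Ideal R)

lemma tp_apply {X Y : Type u} [AddCommGroup X] [AddCommGroup Y] [Module R X] [Module R Y]
    (δ : X →ₗ[R] Y) (ψ : Y →ₗ[R] R) : tp δ ψ = ψ ∘ₗ δ := rfl

/-- `Q` holds for `R` as a right module over itself, in every degree. -/
lemma QhR (m : ℕ) : Qh I R m := by
  intro x hx
  obtain ⟨f, hf⟩ := (good_Nd I (m+1)).ev_surj x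
  have hDf : Dd I m f = 0 := by
    apply (good_Nd I m).sep
    intro ψ
    have := congrFun (congrArg DFunLike.coe hx) ψ
    simp only [LinearMap.comp_apply, LinearMap.zero_apply] at this
    rw [tp_apply] at this
    rw [← hf] at this
    exact this
  have : f ∈ LinearMap.range (Dd I (m+1)) := by
    rw [exact_Nd I m]; simpa using hDf
  obtain ⟨g, hg⟩ := this
  refine ⟨ev _ g, ?_⟩
  rw [← hf]
  refine LinearMap.ext fun ψ => ?_
  show ev _ g (ψ ∘ₗ Dd I (m+1)) = ψ f
  show ψ (Dd I (m+1) g) = ψ f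
  rw [hg]

/-- transport `Q` along an iso of right modules -/
lemma Qh_of_equiv {A B : Type u} [AddCommGroup A] [AddCommGroup B]
    [Module Rᵐᵒᵖ A] [Module Rᵐᵒᵖ B] (e : A ≃ₗ[Rᵐᵒᵖ] B) (m : ℕ)
    (h : Qh I A m) : Qh I B m := by
  intro x hx
  obtain ⟨y, hy⟩ := h ((e.symm : B →ₗ[Rᵐᵒᵖ] A) ∘ₗ x) (by
    rw [LinearMap.comp_assoc, hx, LinearMap.comp_zero])
  refine ⟨(e : A →ₗ[Rᵐᵒᵖ] B) ∘ₗ y, ?_⟩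
  rw [LinearMap.comp_assoc, hy, ← LinearMap.comp_assoc]
  refine LinearMap.ext fun ψ => ?_
  simp

/-- `Q` for arbitrary (possibly infinite) free right modules `ι →₀ Rᵐᵒᵖ`. -/
lemma Qh_finsupp (ι : Type u) (m : ℕ) : Qh I (ι →₀ Rᵐᵒᵖ) m := by
  have QRop : Qh I Rᵐᵒᵖ m := Qh_of_equiv I
    ({ toFun := fun r => MulOpposite.op r
       map_add' := fun _ _ => rfl
       map_smul' := fun a r => by
         show MulOpposite.op (r * a.unop) = a * MulOpposite.op r
         rw [MulOpposite.op_mul, MulOpposite.op_unop]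
       invFun := fun a => a.unop
       left_inv := fun _ => rfl
       right_inv := fun _ => rfl } : R ≃ₗ[Rᵐᵒᵖ] Rᵐᵒᵖ) m (QhR I m)
  intro x hx
  -- components
  have comp' : ∀ c : ι, ∃ yc : (Nd I (m+2) →ₗ[R] R) →ₗ[Rᵐᵒᵖ] Rᵐᵒᵖ,
      yc ∘ₗ tp (Dd I (m+1)) = (Finsupp.lapply c : (ι →₀ Rᵐᵒᵖ) →ₗ[Rᵐᵒᵖ] Rᵐᵒᵖ) ∘ₗ x := by
    intro c
    exact QRop ((Finsupp.lapply c) ∘ₗ x) (by rw [LinearMap.comp_assoc, hx, LinearMap.comp_zero])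
  choose y hy using comp'
  -- finite support
  obtain ⟨k, g, hg⟩ := (good_Nd I (m+1)).tfg
  classical
  set S : Finset ι := Finset.univ.biUnion (fun j : Fin k => (x (g j)).support) with hS
  have hsupp : ∀ ψ, (x ψ).support ⊆ S := by
    intro ψ
    have : ψ ∈ Submodule.span Rᵐᵒᵖ (Set.range g) := by rw [hg]; trivial
    induction this using Submodule.span_induction with
    | mem ψ hψ =>
      obtain ⟨j, rfl⟩ := hψ
      intro c hc
      exact Finset.mem_biUnion.mpr ⟨j, Finset.mem_univ j, hc⟩
    | zero => simp
    | add ψ χ _ _ h1 h2 =>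
      intro c hc
      rw [map_add] at hc
      rcases Finset.mem_union.mp (Finsupp.support_add hc) with h | h
      · exact h1 h
      · exact h2 h
    | smul a ψ _ h1 =>
      intro c hc
      rw [map_smul] at hc
      exact h1 (Finsupp.support_smul hc)
  refine ⟨∑ c ∈ S, (Finsupp.lsingle c : Rᵐᵒᵖ →ₗ[Rᵐᵒᵖ] (ι →₀ Rᵐᵒᵖ)) ∘ₗ (y c), ?_⟩
  refine LinearMap.ext fun ψ => ?_
  rw [LinearMap.comp_apply, LinearMap.sum_apply]
  have : ∀ c ∈ S, ((Finsupp.lsingle c : Rᵐᵒᵖ →ₗ[Rᵐᵒᵖ] (ι →₀ Rᵐᵒᵖ)) ∘ₗ (y c))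
      (tp (Dd I (m+1)) ψ) = Finsupp.single c ((x ψ) c) := by
    intro c _
    rw [LinearMap.comp_apply]
    have := congrFun (congrArg DFunLike.coe (hy c)) ψ
    simp only [LinearMap.comp_apply] at this
    rw [this]
    rfl
  rw [Finset.sum_congr rfl this]
  -- ∑ c ∈ S, single c ((x ψ) c) = x ψ
  refine Finsupp.ext fun b => ?_
  rw [Finset.sum_apply']
  by_cases hb : b ∈ S
  · rw [Finset.sum_eq_single b]
    · simp
    · intro c _ hcb
      exact Finsupp.single_eq_of_ne' hcb
    · intro h; exact absurd hb h
  · have : (x ψ) b = 0 := Finsupp.notMem_support_iff.mp (fun hmem => hb (hsupp ψ hmem))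
    rw [this]
    refine Finset.sum_eq_zero fun c hc => ?_
    rcases eq_or_ne c b with rfl | hne
    · simp [this]
    · exact Finsupp.single_eq_of_ne' hne

/-- `Q` for projective right modules. -/
lemma Qh_proj (P : Type u) [AddCommGroup P] [Module Rᵐᵒᵖ P]
    (hP : Module.Projective Rᵐᵒᵖ P) (m : ℕ) : Qh I P m := by
  obtain ⟨s, hs⟩ := Module.projective_def.mp hP
  set π : (P →₀ Rᵐᵒᵖ) →ₗ[Rᵐᵒᵖ] P := Finsupp.linearCombination Rᵐᵒᵖ id
  intro x hx
  obtain ⟨y, hy⟩ := Qh_finsupp I P m (s ∘ₗ x) (by rw [LinearMap.comp_assoc, hx, LinearMap.comp_zero])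
  refine ⟨π ∘ₗ y, ?_⟩
  rw [LinearMap.comp_assoc, hy, ← LinearMap.comp_assoc]
  refine LinearMap.ext fun ψ => ?_
  simp only [LinearMap.comp_apply]
  exact hs (x ψ)

/-- dimension shifting on the `Tor` side. -/
lemma Qh_chase {K P A : Type u} [AddCommGroup K] [AddCommGroup P] [AddCommGroup A]
    [Module Rᵐᵒᵖ K] [Module Rᵐᵒᵖ P] [Module Rᵐᵒᵖ A]
    (a : K →ₗ[Rᵐᵒᵖ] P) (b : P →ₗ[Rᵐᵒᵖ] A) (ha : Function.Injective a)
    (hb : Function.Surjective b) (hex : LinearMap.range a = LinearMap.ker b)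
    (hP : Module.Projective Rᵐᵒᵖ P) (j : ℕ)
    (hK : Qh I K j) (hPQ : Qh I P (j+1)) : Qh I A (j+1) := by
  intro x hx
  -- lift x along b
  obtain ⟨x', hx'⟩ := Module.projective_lifting_property (h := (good_Nd I (j+2)).tproj) b x hb
  -- boundary of x' lands in K
  obtain ⟨z, hz⟩ := pull_back a ha (x' ∘ₗ tp (Dd I (j+1))) (by
    rintro _ ⟨ψ, rfl⟩
    rw [hex, LinearMap.mem_ker]
    show b (x' ((tp (Dd I (j+1))) ψ)) = 0
    have h1 : b (x' (tp (Dd I (j+1)) ψ)) = x (tp (Dd I (j+1)) ψ) := by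
      rw [← hx']; rfl
    rw [h1]
    have := congrFun (congrArg DFunLike.coe hx) ψ
    simpa using this)
  have hzcyc : z ∘ₗ tp (Dd I j) = 0 := by
    refine LinearMap.ext fun ψ => ?_
    apply ha
    show a (z ((tp (Dd I j)) ψ)) = a ((0 : _ →ₗ[Rᵐᵒᵖ] K) ψ)
    have h1 : a (z (tp (Dd I j) ψ)) = (x' ∘ₗ tp (Dd I (j+1))) (tp (Dd I j) ψ) := by
      rw [← hz]; rfl
    rw [h1]
    have h2 : (tp (Dd I (j+1))) ((tp (Dd I j)) ψ) = (ψ ∘ₗ Dd I j) ∘ₗ Dd I (j+1) := rfl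
    have h3 : (ψ ∘ₗ Dd I j) ∘ₗ Dd I (j+1) = 0 := by
      rw [LinearMap.comp_assoc, Dd_comp_zero, LinearMap.comp_zero]
    rw [LinearMap.comp_apply, h2, h3]
    simp
  obtain ⟨w, hw⟩ := hK z hzcyc
  have hx''cyc : (x' - a ∘ₗ w) ∘ₗ tp (Dd I (j+1)) = 0 := by
    rw [LinearMap.sub_comp, LinearMap.comp_assoc, hw, hz, sub_self]
  obtain ⟨u, hu⟩ := hPQ (x' - a ∘ₗ w) hx''cyc
  refine ⟨b ∘ₗ u, ?_⟩
  rw [LinearMap.comp_assoc, hu]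
  rw [LinearMap.comp_sub, hx']
  have : b ∘ₗ (a ∘ₗ w) = 0 := by
    rw [← LinearMap.comp_assoc]
    have hba : b ∘ₗ a = 0 := by
      refine LinearMap.ext fun t => ?_
      have : a t ∈ LinearMap.ker b := by rw [← hex]; exact LinearMap.mem_range_self a t
      simpa using this
    rw [hba, LinearMap.zero_comp]
  rw [this, sub_zero]

end Qside
section Pdim
variable [IsNoetherianRing R] (I : Ideal R)
open Stmt1

lemma projective_module_of_projective_object (M : ModuleCat.{u} Rᵐᵒᵖ)
    (h : CategoryTheory.Projective M) : Module.Projective Rᵐᵒᵖ M := by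
  have h2 : CategoryTheory.Projective (ModuleCat.of Rᵐᵒᵖ M) :=
    CategoryTheory.Projective.of_iso (Iso.refl _) h
  exact (IsProjective.iff_projective (R := Rᵐᵒᵖ) (P := M)).mpr h2

/-- `Qh` holds above the projective dimension. -/
lemma Qh_of_pdim : ∀ (k : ℕ) (M : ModuleCat.{u} Rᵐᵒᵖ), PdimLE k M → ∀ j, k ≤ j → Qh I M j
  | 0, M, hM, j, _ => Qh_proj I M (projective_module_of_projective_object M hM) j
  | (k+1), M, hM, j, hj => by
    rcases hM with hproj | ⟨K, P, i, p, w, hP, hSE, hK⟩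
    · exact Qh_proj I M (projective_module_of_projective_object M hproj) j
    · obtain ⟨j', rfl⟩ : ∃ j', j = j' + 1 := ⟨j - 1, by omega⟩
      have hinj : Function.Injective i := hSE.moduleCat_injective_f
      have hsurj : Function.Surjective p := hSE.moduleCat_surjective_g
      have hex : LinearMap.range i.hom = LinearMap.ker p.hom :=
        (ShortComplex.moduleCat_exact_iff_range_eq_ker _).mp hSE.exact
      have hPmod : Module.Projective Rᵐᵒᵖ P := projective_module_of_projective_object P hP
      exact Qh_chase I i.hom p.hom hinj hsurj hex hPmod j'
        (Qh_of_pdim k K hK j' (by omega)) (Qh_proj I P hPmod (j'+1))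

end Pdim
section Bridge
variable [IsNoetherianRing R] (I : Ideal R)

/-- The key duality step: `Tor`-side vanishing for the character module of `R`
implies the `Ext`-side extension property for `R`. -/
lemma Eh_of_Qh_char (n : ℕ) (hQ : Qh I (CharacterModule R) n) : Eh I R n := by
  classical
  -- the ℤ-submodule of cocycles
  set Hfull := Nd I (n+1) →ₗ[R] R
  set zmap : Hfull →ₗ[ℤ] (Nd I (n+2) →ₗ[R] R) :=
    (AddMonoidHom.mk' (fun χ => χ ∘ₗ Dd I (n+1))
      (fun χ χ' => LinearMap.add_comp _ _ _)).toIntLinearMap with hzmap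
  set Zs : Submodule ℤ Hfull := LinearMap.ker zmap with hZs
  set toB : (Nd I n →ₗ[R] R) →ₗ[ℤ] Hfull :=
    (AddMonoidHom.mk' (fun ψ => ψ ∘ₗ Dd I n) (fun ψ ψ' => LinearMap.add_comp _ _ _)).toIntLinearMap
    with htoB
  set Bs : Submodule ℤ Hfull := LinearMap.range toB with hBs
  have hBZ : Bs ≤ Zs := by
    rintro _ ⟨ψ, rfl⟩
    refine LinearMap.mem_ker.mpr ?_
    show (ψ ∘ₗ Dd I n) ∘ₗ Dd I (n+1) = 0
    rw [LinearMap.comp_assoc, Dd_comp_zero, LinearMap.comp_zero]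
  have main : Zs ≤ Bs := by
    intro χ0 hχ0
    by_contra hnB
    -- a character of Zs/Bs not vanishing on χ0
    set Bs' : Submodule ℤ Zs := Bs.comap Zs.subtype with hBs'
    have hne : (Submodule.Quotient.mk (⟨χ0, hχ0⟩ : Zs) : Zs ⧸ Bs') ≠ 0 := by
      intro h
      rw [Submodule.Quotient.mk_eq_zero] at h
      exact hnB h
    obtain ⟨c', hc'⟩ := CharacterModule.exists_character_apply_ne_zero_of_ne_zero hne
    set c : CharacterModule Zs := c'.comp (Bs'.mkQ).toAddMonoidHom with hc
    have hcBs : ∀ (z : Zs), (z : Hfull) ∈ Bs → c z = 0 := by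
      intro z hz
      have : Bs'.mkQ z = 0 := by rwa [Submodule.mkQ_apply, Submodule.Quotient.mk_eq_zero]
      show c' (Bs'.mkQ z) = 0
      rw [this, map_zero]
    -- extend to the full hom group
    obtain ⟨C, hC⟩ := char_extend (Zs.subtype.toAddMonoidHom) (Submodule.injective_subtype Zs)
      c
    -- build the Tor-cycle
    set x : Hfull →ₗ[Rᵐᵒᵖ] CharacterModule R :=
      { toFun := fun χ => AddMonoidHom.mk' (fun r => C ((MulOpposite.op r) • χ))
          (fun r s => by
            show C (MulOpposite.op (r + s) • χ) = _
            rw [MulOpposite.op_add, add_smul, map_add])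
        map_add' := fun χ χ' => by
          ext r
          show C (MulOpposite.op r • (χ + χ')) = _
          rw [smul_add, map_add]
          rfl
        map_smul' := fun a χ => by
          ext r
          show C (MulOpposite.op r • (a • χ)) = C (MulOpposite.op (a.unop • r) • χ)
          rw [smul_smul]
          congr 2 } with hx
    have hxcyc : x ∘ₗ tp (Dd I n) = 0 := by
      refine LinearMap.ext fun ψ => ?_
      ext r
      show C (MulOpposite.op r • (ψ ∘ₗ Dd I n)) = 0
      have h1 : MulOpposite.op r • (ψ ∘ₗ Dd I n) = ((MulOpposite.op r • ψ) ∘ₗ Dd I n) :=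
        rfl
      have h2 : ((MulOpposite.op r • ψ) ∘ₗ Dd I n) ∈ Bs := ⟨MulOpposite.op r • ψ, rfl⟩
      rw [h1]
      have h3 : C ((MulOpposite.op r • ψ) ∘ₗ Dd I n) = c ⟨_, hBZ h2⟩ := hC ⟨_, hBZ h2⟩
      rw [h3]
      exact hcBs _ h2
    obtain ⟨y, hy⟩ := hQ x hxcyc
    -- conclude c = 0, contradiction
    have hczero : ∀ z : Zs, c z = 0 := by
      intro z
      have h1 : C (z : Hfull) = c z := hC z
      have h2 : x (z : Hfull) = y ((z : Hfull) ∘ₗ Dd I (n+1)) := by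
        rw [← hy]; rfl
      have h3 : (z : Hfull) ∘ₗ Dd I (n+1) = 0 := z.2
      have h4 : x (z : Hfull) = 0 := by rw [h2, h3, map_zero]
      have h5 : x (z : Hfull) 1 = C ((z : Hfull)) := by
        show C (MulOpposite.op (1:R) • (z : Hfull)) = C (z : Hfull)
        rw [MulOpposite.op_one, one_smul]
      rw [← h1, ← h5, h4]
      rfl
    exact hc' (hczero ⟨χ0, hχ0⟩)
  -- now conclude
  intro φ hφ
  have : φ ∈ Bs := main (LinearMap.mem_ker.mpr hφ)
  obtain ⟨ψ, hψ⟩ := this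
  exact ⟨ψ, hψ⟩

end Bridge
section Eside
variable [IsNoetherianRing R] (I : Ideal R)

/-- dimension shifting on the `Ext` side along a short exact sequence `A ↪ J ↠ B`
with `J` injective. -/
lemma Eh_shift {A J B : Type u} [AddCommGroup A] [AddCommGroup J] [AddCommGroup B]
    [Module R A] [Module R J] [Module R B]
    (α : A →ₗ[R] J) (β : J →ₗ[R] B) (hα : Function.Injective α) (hβ : Function.Surjective β)
    (hex : LinearMap.range α = LinearMap.ker β) (hJ : Module.Injective R J)
    (k : ℕ) (hA : Eh I A (k+1)) : Eh I B k := by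
  intro φ hφ
  -- lift φ along β using projectivity of the node
  obtain ⟨φ', hφ'⟩ := Module.projective_lifting_property
    (h := (good_Nd I (k+1)).proj) β φ hβ
  -- the boundary of φ' comes from A
  obtain ⟨ε, hε⟩ := pull_back α hα (φ' ∘ₗ Dd I (k+1)) (by
    rintro _ ⟨f, rfl⟩
    rw [hex, LinearMap.mem_ker]
    have h1 : β ((φ' ∘ₗ Dd I (k+1)) f) = (φ ∘ₗ Dd I (k+1)) f := by
      rw [← hφ']; rfl
    rw [h1, hφ]
    rfl)
  have hεcyc : ε ∘ₗ Dd I (k+2) = 0 := by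
    refine LinearMap.ext fun f => ?_
    apply hα
    have h1 : α ((ε ∘ₗ Dd I (k+2)) f) = ((φ' ∘ₗ Dd I (k+1)) ∘ₗ Dd I (k+2)) f := by
      show α (ε (Dd I (k+2) f)) = _
      rw [show α (ε (Dd I (k+2) f)) = (α ∘ₗ ε) (Dd I (k+2) f) from rfl, hε]
      rfl
    rw [h1, LinearMap.comp_assoc, Dd_comp_zero, LinearMap.comp_zero]
    simp
  obtain ⟨w, hw⟩ := hA ε hεcyc
  -- ψ̃ kills the kernel of `Dd I k`, factor and extend
  set ψt : Nd I (k+1) →ₗ[R] J := φ' - α ∘ₗ w with hψt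
  have hker : LinearMap.ker (Dd I k) ≤ LinearMap.ker ψt := by
    intro f hf
    rw [← exact_Nd I k] at hf
    obtain ⟨g, rfl⟩ := hf
    rw [LinearMap.mem_ker, hψt]
    show φ' (Dd I (k+1) g) - (α ∘ₗ w) (Dd I (k+1) g) = 0
    have h1 : (α ∘ₗ w) (Dd I (k+1) g) = α (w (Dd I (k+1) g)) := rfl
    have h2 : w (Dd I (k+1) g) = (w ∘ₗ Dd I (k+1)) g := rfl
    rw [h1, h2, hw]
    have h3 : α (ε g) = (α ∘ₗ ε) g := rfl
    rw [h3, hε]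
    simp
  obtain ⟨Θ, hΘ⟩ := factor_extend hJ (Dd I k) ψt hker
  refine ⟨β ∘ₗ Θ, ?_⟩
  rw [LinearMap.comp_assoc, hΘ, hψt, LinearMap.comp_sub, hφ']
  have : β ∘ₗ (α ∘ₗ w) = 0 := by
    rw [← LinearMap.comp_assoc]
    have hba : β ∘ₗ α = 0 := by
      refine LinearMap.ext fun t => ?_
      have : α t ∈ LinearMap.ker β := by rw [← hex]; exact LinearMap.mem_range_self α t
      simpa using this
    rw [hba, LinearMap.zero_comp]
  rw [this, sub_zero]

/-- From the bottom extension property for every ideal, deduce Baer's criterion. -/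
lemma baer_of_Eh (M : Type u) [AddCommGroup M] [Module R M]
    (h : ∀ I : Ideal R, Eh I M 0) : Module.Baer R M := by
  intro I g
  have hE := h I
  have hmem : ∀ f, Dd I 0 f ∈ I := fun f => by
    have : Dd I 0 f ∈ LinearMap.range (Dd I 0) := LinearMap.mem_range_self _ f
    rwa [range_Dd_zero] at this
  set d0r : Nd I 1 →ₗ[R] I := (Dd I 0).codRestrict I hmem with hd0r
  set φ : Nd I 1 →ₗ[R] M := g ∘ₗ d0r with hφdef
  have hφ : φ ∘ₗ Dd I 1 = 0 := by
    refine LinearMap.ext fun f => ?_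
    have h0 : Dd I 0 (Dd I 1 f) = 0 := by
      have := congrFun (congrArg DFunLike.coe (Dd_comp_zero I 0)) f
      simpa using this
    show g (d0r (Dd I 1 f)) = 0
    have hz : d0r (Dd I 1 f) = 0 := Subtype.ext (by
      rw [hd0r]
      show Dd I 0 (Dd I 1 f) = 0
      exact h0)
    rw [hz, map_zero]
  obtain ⟨ψ, hψ⟩ := hE φ hφ
  refine ⟨ψ, fun x hx => ?_⟩
  have hxr : x ∈ LinearMap.range (Dd I 0) := by rwa [range_Dd_zero]
  obtain ⟨f, rfl⟩ := hxr
  have h1 : ψ (Dd I 0 f) = φ f := by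
    have := congrFun (congrArg DFunLike.coe hψ) f
    simpa using this
  exact h1.trans (congrArg g (Subtype.ext rfl))

end Eside

section CharInj

/-- the character module of `R` is an injective right module. -/
lemma char_R_injective : Module.Injective Rᵐᵒᵖ (CharacterModule R) := by
  constructor
  intro X Y _ _ _ _ f hf g
  -- turn g into a character of X, extend along f, turn back
  set cg : CharacterModule X := AddMonoidHom.mk' (fun x => g x 1) (fun x y => by
    show g (x + y) 1 = g x 1 + g y 1
    rw [map_add]
    rfl) with hcg
  obtain ⟨C, hC⟩ := char_extend (f.toAddMonoidHom) hf cg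
  refine ⟨{ toFun := fun y => AddMonoidHom.mk' (fun r => C ((MulOpposite.op r) • y))
              (fun r s => by
                show C (MulOpposite.op (r + s) • y) = _
                rw [MulOpposite.op_add, add_smul, map_add])
            map_add' := fun y y' => by
              ext r
              show C (MulOpposite.op r • (y + y')) = _
              rw [smul_add, map_add]
              rfl
            map_smul' := fun a y => by
              ext r
              show C (MulOpposite.op r • (a • y)) = C (MulOpposite.op (a.unop • r) • y)
              rw [smul_smul]
              congr 2 }, ?_⟩
  intro x
  ext r
  show C (MulOpposite.op r • f x) = g x r
  rw [show MulOpposite.op r • f x = f (MulOpposite.op r • x) from (map_smul f _ _).symm]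
  have h1 : C (f (MulOpposite.op r • x)) = cg (MulOpposite.op r • x) := hC _
  rw [h1]
  show g (MulOpposite.op r • x) 1 = g x r
  rw [map_smul]
  show (g x) ((MulOpposite.op r).unop • (1:R)) = g x r
  rw [MulOpposite.unop_op, smul_eq_mul, mul_one]

end CharInj
section Final
open Stmt1 CategoryTheory.Limits
variable [IsNoetherianRing R]

/-- the cosyzygy tower of `R` as a left module over itself -/
noncomputable def Cos : ℕ → ModuleCat.{u} R
  | 0 => ModuleCat.of R R
  | (k+1) => cokernel (Injective.ι (Cos k))

/-- injective envelope objects in the tower -/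
noncomputable def CosJ (k : ℕ) : ModuleCat.{u} R := Injective.under (Cos (R := R) k)

noncomputable def cosα (k : ℕ) : Cos (R := R) k ⟶ CosJ (R := R) k := Injective.ι _
noncomputable def cosβ (k : ℕ) : CosJ (R := R) k ⟶ Cos (R := R) (k+1) := cokernel.π _

lemma cos_w (k : ℕ) : cosα (R := R) k ≫ cosβ (R := R) k = 0 := cokernel.condition _

lemma cos_shortExact (k : ℕ) :
    (ShortComplex.mk (cosα (R := R) k) (cosβ (R := R) k) (cos_w (R := R) k)).ShortExact := by
  have hexact : (ShortComplex.mk (cosα (R := R) k) (cosβ (R := R) k)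
      (cos_w (R := R) k)).Exact :=
    ShortComplex.exact_of_g_is_cokernel _ (cokernelIsCokernel _)
  exact { exact := hexact
          mono_f := by dsimp [cosα]; exact Injective.ι_mono _
          epi_g := by dsimp [cosβ, CosJ]; exact coequalizer.π_epi }

lemma cos_inj_under (k : ℕ) : Module.Injective R (CosJ (R := R) k) := by
  have h1 : CategoryTheory.Injective (CosJ (R := R) k) := by
    dsimp [CosJ]; infer_instance
  have h2 : CategoryTheory.Injective
      (ModuleCat.of R (CosJ (R := R) k)) :=
    CategoryTheory.Injective.of_iso (Iso.refl _) h1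
  exact Module.injective_module_of_injective_object _ _

/-- the concrete short exact sequence data -/
lemma cos_data (k : ℕ) :
    Function.Injective (cosα (R := R) k) ∧ Function.Surjective (cosβ (R := R) k) ∧
    LinearMap.range (cosα (R := R) k).hom
      = LinearMap.ker (cosβ (R := R) k).hom := by
  refine ⟨(cos_shortExact (R := R) k).moduleCat_injective_f,
    (cos_shortExact (R := R) k).moduleCat_surjective_g, ?_⟩
  exact (ShortComplex.moduleCat_exact_iff_range_eq_ker _).mp (cos_shortExact (R := R) k).exact

/-- the Ext-side chain along the cosyzygy tower -/
lemma Eh_chain (I : Ideal R) (n : ℕ) (hR : Eh I R n) :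
    ∀ j, j ≤ n → Eh I (Cos (R := R) j) (n - j)
  | 0, _ => by
      have h0 : n - 0 = n := by omega
      rw [h0]
      exact hR
  | (j+1), hj => by
      have h1 : Eh I (Cos (R := R) j) (n - j) := Eh_chain I n hR j (by omega)
      have h2 : n - j = (n - (j+1)) + 1 := by omega
      rw [h2] at h1
      obtain ⟨hinj, hsurj, hex⟩ := cos_data (R := R) j
      exact Eh_shift I _ _ hinj hsurj hex (cos_inj_under j) _ h1

/-- dimension-shifting step for `IdimLE` -/
lemma idim_step (k j : ℕ) (h : IdimLE j (Cos (R := R) (k+1))) :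
    IdimLE (j+1) (Cos (R := R) k) :=
  Or.inr ⟨CosJ (R := R) k, Cos (R := R) (k+1), cosα (R := R) k, cosβ (R := R) k,
    cos_w (R := R) k, by dsimp [CosJ]; infer_instance, cos_shortExact (R := R) k, h⟩

end Final

end IwGor


/-- If `R` is a two-sided noetherian ring such that the category of right
`R`-modules (that is, left `Rᵐᵒᵖ`-modules) is a Gorenstein category, then `R` is
Iwanaga–Gorenstein: it has finite self-injective dimension both as a left module over
itself and as a right module over itself. -/
theorem iwanaga_gorenstein_of_gorenstein_module_category
    (R : Type u) [Ring R] [IsNoetherianRing R] [IsNoetherianRing Rᵐᵒᵖ]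
    (hGor : IsGorenstein (ModuleCat.{u} Rᵐᵒᵖ)) :
    (∃ n : ℕ, IdimLE n (ModuleCat.of R R)) ∧
    (∃ n : ℕ, IdimLE n (ModuleCat.of Rᵐᵒᵖ Rᵐᵒᵖ)) := by
  obtain ⟨hiff, ⟨n, hpd, -⟩, -⟩ := hGor
  constructor
  · have hRd : Module.Injective Rᵐᵒᵖ (CharacterModule R) := IwGor.char_R_injective
    have hRdObj : CategoryTheory.Injective (ModuleCat.of Rᵐᵒᵖ (CharacterModule R)) :=
      Module.injective_object_of_injective_module _ _
    have hFinI : FinIdim (ModuleCat.of Rᵐᵒᵖ (CharacterModule R)) := ⟨0, hRdObj⟩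
    have hPd : PdimLE n (ModuleCat.of Rᵐᵒᵖ (CharacterModule R)) :=
      hpd _ ((hiff _).mpr hFinI)
    have hBaer : Module.Baer R (IwGor.Cos (R := R) n) := by
      apply IwGor.baer_of_Eh
      intro I
      have hQ : IwGor.Qh I (CharacterModule R) n :=
        IwGor.Qh_of_pdim I n (ModuleCat.of Rᵐᵒᵖ (CharacterModule R)) hPd n le_rfl
      have hEhR : IwGor.Eh I R n := IwGor.Eh_of_Qh_char I n hQ
      have h := IwGor.Eh_chain I n hEhR n le_rfl
      rw [Nat.sub_self] at h
      exact h
    have hInj : CategoryTheory.Injective (IwGor.Cos (R := R) n) := by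
      have h1 : Module.Injective R (IwGor.Cos (R := R) n) := hBaer.injective
      have h2 : CategoryTheory.Injective (ModuleCat.of R (IwGor.Cos (R := R) n)) :=
        Module.injective_object_of_injective_module _ _
      exact CategoryTheory.Injective.of_iso (Iso.refl _) h2
    have hchain : ∀ j, j ≤ n → IdimLE j (IwGor.Cos (R := R) (n - j)) := by
      intro j
      induction j with
      | zero =>
        intro _
        rw [Nat.sub_zero]
        exact hInj
      | succ j ih =>
        intro hj
        have h1 := ih (by omega)
        have h2 : n - j = (n - (j+1)) + 1 := by omega
        rw [h2] at h1
        exact IwGor.idim_step _ _ h1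
    have hfin := hchain n le_rfl
    rw [Nat.sub_self] at hfin
    exact ⟨n, hfin⟩
  · have hproj : CategoryTheory.Projective (ModuleCat.of Rᵐᵒᵖ Rᵐᵒᵖ) :=
      (IsProjective.iff_projective _).mp inferInstance
    exact (hiff _).mp ⟨0, hproj⟩
end

section
/- Let T be a triangulated category and C ⊆ T a small suspension-closed full subcategory such that Mod C is Gorenstein and locally coherent. If x → y → z → Σx is a distinguished triangle in T with all three vertices in the additive closure add C, then the image in Mod C of the induced map h_C(x) → h_C(y) is a finitely generated Gorenstein projective C-module, where h_C is the restricted Yoneda functor X ↦ T(−, X)|_C. -/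
open CategoryTheory CategoryTheory.Limits CategoryTheory.Pretriangulated

universe w v u

namespace Stmt11

variable {C : Type u} [Category.{v} C] [Preadditive C]

/-- The category of right `C`-modules: contravariant additive functors `Cᵒᵖ ⥤ Ab`. -/
abbrev Mod' (C : Type u) [Category.{v} C] [Preadditive C] :=
  ObjectProperty.FullSubcategory (fun F : Cᵒᵖ ⥤ AddCommGrpCat.{v} => F.Additive)

/-- The representable module `C(−, c)`. -/
def repr' (c : C) : Mod' C := ⟨preadditiveYoneda.obj c, inferInstance⟩

/-- The component of a morphism of modules at an object of `Cᵒᵖ`. -/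
def app' {M N : Mod' C} (f : M ⟶ N) (c : Cᵒᵖ) : M.obj.obj c ⟶ N.obj.obj c :=
  NatTrans.app f.hom c

/-- A morphism of modules is a *pointwise epimorphism*. -/
def Epi' {M N : Mod' C} (f : M ⟶ N) : Prop :=
  ∀ c : Cᵒᵖ, Function.Surjective (app' f c)

/-- A morphism of modules is a *pointwise monomorphism*. -/
def Mono' {M N : Mod' C} (f : M ⟶ N) : Prop :=
  ∀ c : Cᵒᵖ, Function.Injective (app' f c)

/-- Pointwise exactness of a composable pair of morphisms of modules. -/
def ExactAt' {K L M : Mod' C} (f : K ⟶ L) (g : L ⟶ M) : Prop :=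
  ∀ c : Cᵒᵖ, Function.Exact (app' f c) (app' g c)

/-- `0 → K → L → M → 0` is a short exact sequence of modules. -/
def SES' {K L M : Mod' C} (f : K ⟶ L) (g : L ⟶ M) : Prop :=
  Mono' f ∧ ExactAt' f g ∧ Epi' g

/-- A module `P` is *projective* (with respect to pointwise epimorphisms). -/
def Projective' (P : Mod' C) : Prop :=
  ∀ {M N : Mod' C} (e : M ⟶ N), Epi' e → ∀ f : P ⟶ N, ∃ g : P ⟶ M, g ≫ e = f

/-- A module `I` is *injective* (with respect to pointwise monomorphisms). -/
def Injective' (I : Mod' C) : Prop :=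
  ∀ {M N : Mod' C} (m : M ⟶ N), Mono' m → ∀ f : M ⟶ I, ∃ g : N ⟶ I, m ≫ g = f

/-- `P` is a coproduct of the representables at the family `c` of objects of `C`. -/
def IsCoprodOfRepr {I : Type w} (c : I → C) (P : Mod' C) : Prop :=
  ∃ ι : ∀ i, repr' (c i) ⟶ P, Nonempty (IsColimit (Cofan.mk P ι))

/-- A module is *free* on a family of objects indexed by `I` if it is a coproduct of
representables with that index set. -/
def IsFreeOn (I : Type w) (P : Mod' C) : Prop :=
  ∃ c : I → C, IsCoprodOfRepr c P

/-- Finitely generated free: finite coproduct of representables. -/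
def FinFree (P : Mod' C) : Prop := ∃ n : ℕ, IsFreeOn (Fin n) P

/-- Finitely generated module. -/
def FinGen (M : Mod' C) : Prop :=
  ∃ P : Mod' C, FinFree P ∧ ∃ e : P ⟶ M, Epi' e

/-- Finitely presented module. -/
def FinPres (M : Mod' C) : Prop :=
  ∃ (P₁ P₀ : Mod' C) (g : P₁ ⟶ P₀) (e : P₀ ⟶ M),
    FinFree P₁ ∧ FinFree P₀ ∧ ExactAt' g e ∧ Epi' e

/-- Projective dimension at most `n`. -/
def PdimLE' : ℕ → Mod' C → Prop
  | 0, M => Projective' M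
  | n + 1, M => Projective' M ∨
      ∃ (K P : Mod' C) (i : K ⟶ P) (p : P ⟶ M),
        Projective' P ∧ SES' i p ∧ PdimLE' n K

/-- Injective dimension at most `n`. -/
def IdimLE' : ℕ → Mod' C → Prop
  | 0, M => Injective' M
  | n + 1, M => Injective' M ∨
      ∃ (I K : Mod' C) (i : M ⟶ I) (p : I ⟶ K),
        Injective' I ∧ SES' i p ∧ IdimLE' n K

def FinPdim' (M : Mod' C) : Prop := ∃ n, PdimLE' n M

def FinIdim' (M : Mod' C) : Prop := ∃ n, IdimLE' n M

/-- The module category of `C` is a Gorenstein category. -/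
def IsGorensteinMod (C : Type u) [Category.{v} C] [Preadditive C] : Prop :=
  (∀ M : Mod' C, FinPdim' M ↔ FinIdim' M) ∧
  (∃ n : ℕ, (∀ M : Mod' C, FinPdim' M → PdimLE' n M) ∧
            (∀ M : Mod' C, FinIdim' M → IdimLE' n M)) ∧
  (∃ G : Mod' C, IsSeparator G ∧ FinPdim' G)

/-- Gorenstein with Gorenstein dimension at most `n`. -/
def IsGorensteinModDimLE (C : Type u) [Category.{v} C] [Preadditive C] (n : ℕ) : Prop :=
  IsGorensteinMod C ∧
  (∀ M : Mod' C, FinPdim' M → PdimLE' n M) ∧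
  (∀ M : Mod' C, FinIdim' M → IdimLE' n M)

/-- A module `M` is *Gorenstein projective* if it admits a complete projective
resolution. -/
def GProj' (M : Mod' C) : Prop :=
  ∃ (P : ℤ → Mod' C) (d : ∀ i : ℤ, P (i + 1) ⟶ P i),
    (∀ i, Projective' (P i)) ∧
    (∀ i : ℤ, ExactAt' (d (i + 1)) (d i)) ∧
    (∀ (Q : Mod' C), Projective' Q → ∀ (i : ℤ) (g : P (i + 1) ⟶ Q),
      (d (i + 1) ≫ g = 0 ↔ ∃ h : P i ⟶ Q, d i ≫ h = g)) ∧
    (∃ (e : P (0 + 1) ⟶ M) (m : M ⟶ P 0), Epi' e ∧ Mono' m ∧ e ≫ m = d 0)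

/-- Local coherence of `Mod C`: the kernel of any morphism between finitely presented
modules is again finitely presented. -/
def LocallyCoherent (C : Type u) [Category.{v} C] [Preadditive C] : Prop :=
  ∀ {M N : Mod' C} (f : M ⟶ N), FinPres M → FinPres N →
    ∀ (K : Mod' C) (k : K ⟶ M), Mono' k → ExactAt' k f → FinPres K

/-- The closure of a class of modules under extensions and retracts. -/
inductive ExtClosure (X : Mod' C → Prop) : Mod' C → Prop
  | base {M} : X M → ExtClosure X M
  | ext {K L M} (f : K ⟶ L) (g : L ⟶ M) :
      SES' f g → ExtClosure X K → ExtClosure X M → ExtClosure X L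
  | retract {L L'} (i : L' ⟶ L) (r : L ⟶ L') :
      i ≫ r = 𝟙 L' → ExtClosure X L → ExtClosure X L'

variable {T : Type u} [Category.{v} T] [Preadditive T] [HasZeroObject T] [HasShift T ℤ]
  [∀ n : ℤ, (CategoryTheory.shiftFunctor T n).Additive] [Pretriangulated T]

variable (S : Set T)

/-- The full subcategory of `T` on the set of objects `S`. -/
abbrev SubC := ObjectProperty.FullSubcategory (fun X : T => X ∈ S)

instance : (ObjectProperty.ι (fun X : T => X ∈ S)).Additive where
  map_add := rfl

/-- `S` is closed under suspension (in both directions). -/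
def SuspClosed : Prop :=
  ∀ X ∈ S, X⟦(1 : ℤ)⟧ ∈ S ∧ X⟦(-1 : ℤ)⟧ ∈ S

/-- The restricted Yoneda functor `h_C` on objects: `X ↦ T(−, X)|_C`. -/
def hC (X : T) : Mod' (SubC S) :=
  ⟨(ObjectProperty.ι (fun X : T => X ∈ S)).op ⋙ preadditiveYoneda.obj X,
    inferInstance⟩

/-- The restricted Yoneda functor `h_C` on morphisms. -/
def hCmap {X Y : T} (f : X ⟶ Y) : hC S X ⟶ hC S Y :=
  ObjectProperty.homMk (Functor.whiskerLeft (ObjectProperty.ι (fun X : T => X ∈ S)).op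
    (preadditiveYoneda.map f))

/-- `X` belongs to the additive closure `add C` of `S` in `T`: it is a retract of a
finite coproduct of objects of `S`. -/
def InAdd (X : T) : Prop :=
  ∃ (n : ℕ) (c : Fin n → T) (_ : ∀ i, c i ∈ S) (Y : T) (ι : ∀ i, c i ⟶ Y),
    Nonempty (IsColimit (Cofan.mk Y ι)) ∧
    ∃ (s : X ⟶ Y) (r : Y ⟶ X), s ≫ r = 𝟙 X

end Stmt11

open Stmt11
set_option linter.unusedSectionVars false
namespace Stmt11Aux
open CategoryTheory CategoryTheory.Limits CategoryTheory.Pretriangulated Stmt11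

section ModBasics
variable {C : Type u} [Category.{v} C] [Preadditive C]

lemma hom_ext' {M N : Mod' C} {f g : M ⟶ N} (h : ∀ d x, app' f d x = app' g d x) : f = g := by
  apply ObjectProperty.hom_ext; apply NatTrans.ext; funext d; exact AddCommGrpCat.ext (h d)

def mkHom {M N : Mod' C} (a : ∀ d, M.obj.obj d ⟶ N.obj.obj d)
    (h : ∀ {d d'} (ρ : d ⟶ d') (x), a d' (M.obj.map ρ x) = N.obj.map ρ (a d x)) : M ⟶ N :=
  ObjectProperty.homMk { app := a, naturality := fun _ _ ρ => by ext x; exact h ρ x }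

@[simp] lemma app'_mkHom {M N : Mod' C} (a) (h) (d) (x) :
    app' (mkHom (M := M) (N := N) a h) d x = a d x := rfl

lemma app'_comp {M N P : Mod' C} (f : M ⟶ N) (g : N ⟶ P) (d : Cᵒᵖ) (x) :
    app' (f ≫ g) d x = app' g d (app' f d x) := rfl

lemma app'_zero {M N : Mod' C} (d) (x) : app' (0 : M ⟶ N) d x = 0 := rfl

lemma app'_sub {M N : Mod' C} (f g : M ⟶ N) (d) (x) :
    app' (f - g) d x = app' f d x - app' g d x := rfl

lemma naturality' {M N : Mod' C} (f : M ⟶ N) {d d' : Cᵒᵖ} (ρ : d ⟶ d') (x) :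
    app' f d' (M.obj.map ρ x) = N.obj.map ρ (app' f d x) := ConcreteCategory.congr_hom (f.hom.naturality ρ) x

lemma epi'_comp {M N P : Mod' C} {f : M ⟶ N} {g : N ⟶ P} (hf : Epi' f) (hg : Epi' g) :
    Epi' (f ≫ g) := fun d => (hg d).comp (hf d)

lemma mono'_cancel {M N P : Mod' C} {m : N ⟶ P} (hm : Mono' m) {f g : M ⟶ N}
    (h : f ≫ m = g ≫ m) : f = g :=
  hom_ext' fun d x => hm d (by
    have := congrArg (fun t => app' t d x) h
    simpa [app'_comp] using this)

/-- factor a morphism through a pointwise monomorphism, given a pointwise range condition -/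
lemma factorThruMono {P Q I : Mod' C} (m₀ : Q ⟶ I) (hm : Mono' m₀) (f : P ⟶ I)
    (hf : ∀ d x, ∃ y, app' m₀ d y = app' f d x) : ∃ h : P ⟶ Q, h ≫ m₀ = f := by
  choose φ hφ using hf
  refine ⟨mkHom (fun d => AddCommGrpCat.ofHom
    { toFun := fun x => φ d x
      map_zero' := hm d (by rw [hφ]; simp)
      map_add' := fun a b => hm d (by rw [map_add, hφ, hφ, hφ, map_add]) }) ?_, ?_⟩
  · intro d d' ρ x
    apply hm d'
    show app' m₀ d' (φ d' (P.obj.map ρ x)) = app' m₀ d' (Q.obj.map ρ (φ d x))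
    rw [hφ, naturality' m₀, hφ, naturality' f]
  · exact hom_ext' fun d x => by
      rw [app'_comp, app'_mkHom]
      exact hφ d x

end ModBasics
end Stmt11Aux
namespace Stmt11Aux
open CategoryTheory CategoryTheory.Limits CategoryTheory.Pretriangulated Stmt11

section Tcat
variable {T : Type u} [Category.{v} T] [Preadditive T] [HasZeroObject T] [HasShift T ℤ]
  [∀ n : ℤ, (CategoryTheory.shiftFunctor T n).Additive] [Pretriangulated T] {S : Set T}

@[simp] lemma app'_hCmap {X Y : T} (φ : X ⟶ Y) (d) (ψ : (Opposite.unop d).obj ⟶ X) :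
    app' (hCmap S φ) d ψ = ψ ≫ φ := rfl

lemma hC_map_eq (X : T) {d d' : (SubC S)ᵒᵖ} (ρ : d ⟶ d') (ψ : (Opposite.unop d).obj ⟶ X) :
    (hC S X).obj.map ρ ψ =
      ρ.unop.hom ≫ ψ := rfl

lemma hCmap_comp {X Y Z : T} (φ : X ⟶ Y) (ψ : Y ⟶ Z) :
    hCmap S (φ ≫ ψ) = hCmap S φ ≫ hCmap S ψ :=
  hom_ext' fun d x => (Category.assoc _ _ _).symm

lemma hCmap_zero {X Y : T} : hCmap S (0 : X ⟶ Y) = 0 :=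
  hom_ext' fun d x => Limits.comp_zero

/-- data witnessing membership in the additive closure -/
structure AddData (S : Set T) (X : T) where
  n : ℕ
  c : Fin n → T
  hc : ∀ i, c i ∈ S
  Y : T
  ι : ∀ i, c i ⟶ Y
  colim : IsColimit (Cofan.mk Y ι)
  s : X ⟶ Y
  r : Y ⟶ X
  hsr : s ≫ r = 𝟙 X

noncomputable def addData {X : T} (h : InAdd S X) : AddData S X := by
  choose n c hc Y ι hco s r hsr using h
  exact ⟨n, c, hc, Y, ι, hco.some, s, r, hsr⟩

variable {X : T}

noncomputable def AddData.π (D : AddData S X) (j : Fin D.n) : D.Y ⟶ D.c j :=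
  D.colim.desc (Cofan.mk (D.c j) (fun i => if h : i = j then eqToHom (congrArg D.c h) else 0))

lemma AddData.ι_π (D : AddData S X) (i j : Fin D.n) :
    D.ι i ≫ D.π j = if h : i = j then eqToHom (congrArg D.c h) else 0 :=
  D.colim.fac _ ⟨i⟩

lemma AddData.sum_π_ι (D : AddData S X) : (∑ j, D.π j ≫ D.ι j) = 𝟙 D.Y := by
  apply D.colim.hom_ext
  rintro ⟨i⟩
  show D.ι i ≫ _ = D.ι i ≫ _
  rw [Preadditive.comp_sum, Category.comp_id]
  have : ∀ j, D.ι i ≫ D.π j ≫ D.ι j =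
      if h : i = j then eqToHom (congrArg D.c h) ≫ D.ι j else 0 := by
    intro j
    rw [← Category.assoc, D.ι_π]
    split <;> simp
  rw [Finset.sum_congr rfl (fun j _ => this j), Finset.sum_dite_eq]
  simp

lemma AddData.decomp (D : AddData S X) {d : T} (φ : d ⟶ X) :
    φ = ∑ j, (φ ≫ D.s ≫ D.π j) ≫ (D.ι j ≫ D.r) := by
  have : ∑ j, (φ ≫ D.s ≫ D.π j) ≫ (D.ι j ≫ D.r) = φ ≫ D.s ≫ (∑ j, D.π j ≫ D.ι j) ≫ D.r := by
    rw [Preadditive.sum_comp, Preadditive.comp_sum, Preadditive.comp_sum]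
    apply Finset.sum_congr rfl
    intro j _
    simp
  rw [this, D.sum_π_ι, Category.id_comp, D.hsr, Category.comp_id]
end Tcat
end Stmt11Aux
namespace Stmt11Aux
open CategoryTheory CategoryTheory.Limits CategoryTheory.Pretriangulated Stmt11
section Proj
variable {T : Type u} [Category.{v} T] [Preadditive T] [HasZeroObject T] [HasShift T ℤ]
  [∀ n : ℤ, (CategoryTheory.shiftFunctor T n).Additive] [Pretriangulated T] {S : Set T}

theorem proj_hC {X : T} (hX : InAdd S X) : Projective' (hC S X) := by
  have D := addData hX
  intro M N e he f
  haveI : M.obj.Additive := M.property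
  haveI : N.obj.Additive := N.property
  choose lft hlft using he
  let ci : Fin D.n → SubC S := fun i => ⟨D.c i, D.hc i⟩
  let m : ∀ i, M.obj.obj (Opposite.op (ci i)) :=
    fun i => lft (Opposite.op (ci i))
      (app' f (Opposite.op (ci i)) (show (ci i).obj ⟶ X from D.ι i ≫ D.r))
  -- the morphism d ⟶ ci i induced by an element φ
  let ψm : ∀ (d : (SubC S)ᵒᵖ) (φ : (hC S X).obj.obj d) (i : Fin D.n), Opposite.unop d ⟶ ci i :=
    fun d φ i => ObjectProperty.homMk (show (Opposite.unop d).obj ⟶ D.c i from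
      (φ : (Opposite.unop d).obj ⟶ X) ≫ D.s ≫ D.π i)
  have ψm_add : ∀ d (φ φ' : (hC S X).obj.obj d) i, ψm d (φ + φ') i = ψm d φ i + ψm d φ' i := by
    intro d φ φ' i
    apply ObjectProperty.hom_ext
    show ((φ : (Opposite.unop d).obj ⟶ X) + φ') ≫ D.s ≫ D.π i = _
    exact Preadditive.add_comp _ _ _ _ _ _
  have ψm_nat : ∀ {d d'} (ρ : d ⟶ d') (φ : (hC S X).obj.obj d) i,
      ψm d' ((hC S X).obj.map ρ φ) i = ρ.unop ≫ ψm d φ i := by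
    intro d d' ρ φ i
    apply ObjectProperty.hom_ext
    show (ρ.unop.hom ≫
      (φ : (Opposite.unop d).obj ⟶ X)) ≫ D.s ≫ D.π i = _
    exact Category.assoc _ _ _
  refine ⟨mkHom (fun d => AddCommGrpCat.ofHom
      { toFun := fun φ => ∑ i, M.obj.map (ψm d φ i).op (m i)
        map_zero' := ?_
        map_add' := ?_ }) ?_, ?_⟩
  · -- zero
    apply Finset.sum_eq_zero
    intro i _
    have h0 : ψm d (0 : (hC S X).obj.obj d) i = 0 := by
      apply ObjectProperty.hom_ext
      show ((0 : (Opposite.unop d).obj ⟶ X)) ≫ D.s ≫ D.π i = _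
      rw [Limits.zero_comp] <;> rfl
    refine (congrArg (fun t : Opposite.unop d ⟶ ci i => M.obj.map t.op (m i)) h0).trans ?_
    show M.obj.map (0 : Opposite.unop d ⟶ ci i).op (m i) = 0
    have : (0 : Opposite.unop d ⟶ ci i).op = 0 := rfl
    rw [this, M.obj.map_zero] <;> rfl
  · intro φ φ'
    show ∑ i, M.obj.map (ψm d (φ + φ') i).op (m i)
        = (∑ i, M.obj.map (ψm d φ i).op (m i)) + ∑ i, M.obj.map (ψm d φ' i).op (m i)
    rw [← Finset.sum_add_distrib]
    apply Finset.sum_congr rfl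
    intro i _
    refine (congrArg (fun t : Opposite.unop d ⟶ ci i => M.obj.map t.op (m i)) (ψm_add d φ φ' i)).trans ?_
    exact (show M.obj.map ((ψm d φ i).op + (ψm d φ' i).op) (m i) = _ by
      rw [M.obj.map_add]; rfl)
  · -- naturality
    intro d d' ρ φ
    show ∑ i, M.obj.map (ψm d' ((hC S X).obj.map ρ φ) i).op (m i)
        = M.obj.map ρ (∑ i, M.obj.map (ψm d φ i).op (m i))
    rw [map_sum]
    apply Finset.sum_congr rfl
    intro i _
    rw [ψm_nat]
    have : ((ρ.unop ≫ ψm d φ i).op) = (ψm d φ i).op ≫ ρ := rfl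
    rw [this, M.obj.map_comp]
    rfl
  · -- g ≫ e = f
    apply hom_ext'
    intro d φ
    rw [app'_comp]
    show app' e d (∑ i, M.obj.map (ψm d φ i).op (m i)) = app' f d φ
    rw [map_sum]
    have step : ∀ i, app' e d (M.obj.map (ψm d φ i).op (m i))
        = app' f d ((hC S X).obj.map (ψm d φ i).op
            (show (ci i).obj ⟶ X from D.ι i ≫ D.r)) := by
      intro i
      rw [naturality' e, hlft]; exact (naturality' f _ _).symm
    rw [Finset.sum_congr rfl (fun i _ => step i), ← map_sum]
    congr 1
    show ∑ i, (hC S X).obj.map (ψm d φ i).op _ = φ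
    have : ∀ i, (hC S X).obj.map (ψm d φ i).op
        (show (ci i).obj ⟶ X from D.ι i ≫ D.r)
        = (((φ : (Opposite.unop d).obj ⟶ X) ≫ D.s ≫ D.π i) ≫ (D.ι i ≫ D.r)
            : (Opposite.unop d).obj ⟶ X) := fun i => rfl
    rw [Finset.sum_congr rfl (fun i _ => this i)]
    exact (D.decomp (φ : (Opposite.unop d).obj ⟶ X)).symm
end Proj
end Stmt11Aux
namespace Stmt11Aux
open CategoryTheory CategoryTheory.Limits CategoryTheory.Pretriangulated Stmt11
section Shift
variable {T : Type u} [Category.{v} T] [Preadditive T] [HasZeroObject T] [HasShift T ℤ]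
  [∀ n : ℤ, (CategoryTheory.shiftFunctor T n).Additive] [Pretriangulated T] {S : Set T}

noncomputable def mapCofanColimit {D : Type u₁} {E : Type u₂} [Category.{v₁} D] [Category.{v₂} E] {n : ℕ}
    {c : Fin n → D} {Y : D} (ι : ∀ i, c i ⟶ Y) (h : IsColimit (Cofan.mk Y ι)) (G : D ⥤ E)
    [PreservesColimitsOfSize.{0, 0} G] :
    IsColimit (Cofan.mk (G.obj Y) (fun i => G.map (ι i))) := by
  have pc := isColimitOfPreserves G h
  refine IsColimit.ofIsoColimit
    ((IsColimit.precomposeHomEquiv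
      (Discrete.natIso (F := Discrete.functor fun i => G.obj (c i))
        (G := Discrete.functor c ⋙ G) (fun i => Iso.refl _))
      (G.mapCocone (Cofan.mk Y ι))).symm pc)
    (Cocones.ext (Iso.refl _) ?_)
  rintro ⟨j⟩
  simp

lemma inAdd_shift {X : T} (n : ℤ) (hn : ∀ c ∈ S, (c⟦n⟧ : T) ∈ S) (h : InAdd S X) :
    InAdd S (X⟦n⟧ : T) := by
  obtain ⟨m, c, hc, Y, ι, ⟨hco⟩, s, r, hsr⟩ := h
  refine ⟨m, fun i => (c i)⟦n⟧, fun i => hn _ (hc i), Y⟦n⟧, fun i => (ι i)⟦n⟧',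
    ⟨mapCofanColimit ι hco (shiftFunctor T n)⟩, s⟦n⟧', r⟦n⟧', ?_⟩
  rw [← (shiftFunctor T n).map_comp, hsr, (shiftFunctor T n).map_id]
end Shift

section Tower
variable {T : Type u} [Category.{v} T] [Preadditive T] [HasZeroObject T] [HasShift T ℤ]
  [∀ n : ℤ, (CategoryTheory.shiftFunctor T n).Additive] [Pretriangulated T] {S : Set T}
variable {x y z : T} (f : x ⟶ y) (u : y ⟶ z) (v : z ⟶ x⟦(1 : ℤ)⟧)

/-- upward tower of triangles (inverse rotations) -/
noncomputable def Ut : ℕ → Triangle T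
  | 0 => Triangle.mk f u v
  | n + 1 => (Ut n).invRotate

/-- downward tower of triangles (rotations) -/
noncomputable def Dt : ℕ → Triangle T
  | 0 => Triangle.mk f u v
  | n + 1 => (Dt n).rotate

/-- the ℤ-indexed family of objects of the complete resolution -/
noncomputable def Ob : ℤ → T
  | .ofNat 0 => y
  | .ofNat (n + 1) => (Ut f u v n).obj₁
  | .negSucc n => (Dt f u v (n + 1)).obj₂

/-- the differentials -/
noncomputable def δ : ∀ i : ℤ, Ob f u v (i + 1) ⟶ Ob f u v i
  | .ofNat 0 => f
  | .ofNat (n + 1) => (Ut f u v (n + 1)).mor₁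
  | .negSucc 0 => u
  | .negSucc (n + 1) => (Dt f u v (n + 1)).mor₂

variable (hdist : Triangle.mk f u v ∈ distTriang T)
include hdist

lemma Ut_dist : ∀ n, Ut f u v n ∈ distTriang T
  | 0 => hdist
  | n + 1 => inv_rot_of_distTriang _ (Ut_dist n)

lemma Dt_dist : ∀ n, Dt f u v n ∈ distTriang T
  | 0 => hdist
  | n + 1 => rot_of_distTriang _ (Dt_dist n)

lemma tri : ∀ i : ℤ, ∃ w : Ob f u v i ⟶ (Ob f u v (i + 1 + 1))⟦(1 : ℤ)⟧,
    Triangle.mk (δ f u v (i + 1)) (δ f u v i) w ∈ distTriang T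
  | .ofNat 0 => ⟨(Ut f u v 1).mor₃, Ut_dist f u v hdist 1⟩
  | .ofNat (n + 1) => ⟨(Ut f u v (n + 2)).mor₃, Ut_dist f u v hdist (n + 2)⟩
  | .negSucc 0 => ⟨v, hdist⟩
  | .negSucc 1 => ⟨(Dt f u v 1).mor₃, Dt_dist f u v hdist 1⟩
  | .negSucc (n + 2) => ⟨(Dt f u v (n + 2)).mor₃, Dt_dist f u v hdist (n + 2)⟩

lemma δ_comp_zero (i : ℤ) : δ f u v (i + 1) ≫ δ f u v i = 0 := by
  obtain ⟨w, hw⟩ := tri f u v hdist i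
  exact comp_distTriang_mor_zero₁₂ _ hw
end Tower
end Stmt11Aux
namespace Stmt11Aux
open CategoryTheory CategoryTheory.Limits CategoryTheory.Pretriangulated Stmt11
section InjStep
variable {T : Type u} [Category.{v} T] [Preadditive T] [HasZeroObject T] [HasShift T ℤ]
  [∀ n : ℤ, (CategoryTheory.shiftFunctor T n).Additive] [Pretriangulated T] {S : Set T}

theorem injStep {a b c : T} (p : a ⟶ b) (q : b ⟶ c) {w : c ⟶ a⟦(1 : ℤ)⟧}
    (hT : Triangle.mk p q w ∈ distTriang T) (Q : Mod' (SubC S)) (hQ : Injective' Q)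
    (g : hC S b ⟶ Q) (hg : hCmap S p ≫ g = 0) :
    ∃ h : hC S c ⟶ Q, hCmap S q ≫ h = g := by
  haveI : Q.obj.Additive := Q.property
  -- well-definedness on the image
  have welldef : ∀ (d : (SubC S)ᵒᵖ) (φ φ' : (Opposite.unop d).obj ⟶ b),
      φ ≫ q = φ' ≫ q → app' g d φ = app' g d φ' := by
    intro d φ φ' hqq
    have hz : (φ - φ') ≫ q = 0 := by rw [Preadditive.sub_comp, hqq, sub_self]
    obtain ⟨ψ, hψ⟩ := Triangle.coyoneda_exact₂ _ hT (φ - φ') hz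
    have : app' g d φ - app' g d φ' = 0 := by
      have h1 : app' g d φ - app' g d φ' = app' g d ((φ - φ' : (Opposite.unop d).obj ⟶ b)) := by
        rw [show ((φ - φ' : (Opposite.unop d).obj ⟶ b) : (hC S b).obj.obj d)
          = (φ : (hC S b).obj.obj d) - φ' from rfl]; exact (map_sub _ _ _).symm
      rw [h1, hψ]
      show app' (hCmap S p ≫ g) d ψ = 0
      rw [hg] <;> rfl
    exact sub_eq_zero.mp this
  -- the composition-with-q homomorphisms and their ranges
  let cmp : ∀ d : (SubC S)ᵒᵖ,
      ((Opposite.unop d).obj ⟶ b) →+ ((Opposite.unop d).obj ⟶ c) := fun d =>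
    AddMonoidHom.mk' (fun φ => φ ≫ q) (fun _ _ => Preadditive.add_comp _ _ _ _ _ _)
  let rng : ∀ d : (SubC S)ᵒᵖ, AddSubgroup ((Opposite.unop d).obj ⟶ c) := fun d => (cmp d).range
  -- the image submodule K
  let K : Mod' (SubC S) :=
    ⟨{ obj := fun d => AddCommGrpCat.of (rng d)
       map := fun {d d'} ρ => AddCommGrpCat.ofHom
        { toFun := fun χ => ⟨ρ.unop.hom ≫ (χ : ((Opposite.unop d).obj ⟶ c)), by
            obtain ⟨φ₀, hφ₀⟩ := AddMonoidHom.mem_range.mp χ.2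
            exact AddMonoidHom.mem_range.mpr ⟨ρ.unop.hom ≫ φ₀, by
                show (_ ≫ φ₀) ≫ q = _
                rw [Category.assoc]
                exact congrArg _ hφ₀⟩⟩
          map_zero' := by apply Subtype.ext; exact Limits.comp_zero
          map_add' := fun χ χ' => by apply Subtype.ext; exact Preadditive.comp_add _ _ _ _ _ _ }
       map_id := fun d => by
         apply AddCommGrpCat.ext; intro χ; apply Subtype.ext; exact Category.id_comp _
       map_comp := fun {d d' d''} ρ σ => by
         apply AddCommGrpCat.ext; intro χ; apply Subtype.ext; exact Category.assoc _ _ _ },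
     ⟨fun {d d'} {ρ σ} => by
        apply AddCommGrpCat.ext; intro χ; apply Subtype.ext
        exact Preadditive.add_comp _ _ _ _ _ _⟩⟩
  -- inclusion and corestriction
  let j : K ⟶ hC S c := mkHom (fun d => AddCommGrpCat.ofHom (rng d).subtype)
    (fun ρ χ => rfl)
  have hjmono : Mono' j := fun d => Subtype.coe_injective
  -- choice of preimages
  let pick : ∀ (d : (SubC S)ᵒᵖ) (χ : rng d), ((Opposite.unop d).obj ⟶ b) :=
    fun d χ => (AddMonoidHom.mem_range.mp χ.2).choose
  have hpick : ∀ d (χ : rng d), pick d χ ≫ q = (χ : (Opposite.unop d).obj ⟶ c) :=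
    fun d χ => (AddMonoidHom.mem_range.mp χ.2).choose_spec
  -- the factorization k : K ⟶ Q
  let k : K ⟶ Q := mkHom (fun d => AddCommGrpCat.ofHom (AddMonoidHom.mk'
      (fun χ => app' g d (pick d χ))
      (fun χ χ' => by
        show app' g d (pick d (χ + χ')) = app' g d (pick d χ) + app' g d (pick d χ')
        have h1 : pick d (χ + χ') ≫ q = (pick d χ + pick d χ') ≫ q := by
          rw [hpick, Preadditive.add_comp, hpick, hpick]; rfl
        rw [welldef d _ _ h1]
        rw [show app' g d ((pick d χ + pick d χ' : (Opposite.unop d).obj ⟶ b))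
          = app' g d ((pick d χ : (hC S b).obj.obj d) + pick d χ') from rfl]; exact map_add _ _ _)))
    (by
      intro d d' ρ χ
      show app' g d' (pick d' _) = Q.obj.map ρ (app' g d (pick d χ))
      have h1 : pick d' (K.obj.map ρ χ) ≫ q
          = (ρ.unop.hom
              ≫ pick d χ) ≫ q := by
        rw [hpick, Category.assoc, hpick] <;> rfl
      rw [welldef d' _ _ h1, ← naturality' g ρ (pick d χ)]
      rfl)
  obtain ⟨h, hh⟩ := hQ j hjmono k
  refine ⟨h, hom_ext' fun d φ => ?_⟩
  have hφmem : (φ ≫ q : (Opposite.unop d).obj ⟶ c) ∈ rng d :=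
    AddMonoidHom.mem_range.mpr ⟨φ, rfl⟩
  have e1 : app' (hCmap S q ≫ h) d φ = app' (j ≫ h) d ⟨φ ≫ q, hφmem⟩ := rfl
  rw [e1, hh]
  show app' g d (pick d _) = app' g d φ
  exact welldef d _ _ (by rw [hpick])
end InjStep
end Stmt11Aux
namespace Stmt11Aux
open CategoryTheory CategoryTheory.Limits CategoryTheory.Pretriangulated Stmt11
section Main
variable {T : Type u} [Category.{v} T] [Preadditive T] [HasZeroObject T] [HasShift T ℤ]
  [∀ n : ℤ, (CategoryTheory.shiftFunctor T n).Additive] [Pretriangulated T] {S : Set T}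
variable {x y z : T} (f : x ⟶ y) (u : y ⟶ z) (v : z ⟶ x⟦(1 : ℤ)⟧)

lemma Ut_inAdd (hsusp : SuspClosed S) (hx : InAdd S x) (hy : InAdd S y) (hz : InAdd S z)
    (n : ℕ) : InAdd S (Ut f u v n).obj₁ ∧ InAdd S (Ut f u v n).obj₂ ∧
      InAdd S (Ut f u v n).obj₃ := by
  induction n with
  | zero => exact ⟨hx, hy, hz⟩
  | succ n ih =>
    obtain ⟨h1, h2, h3⟩ := ih
    exact ⟨inAdd_shift (-1) (fun c hc => (hsusp c hc).2) h3, h1, h2⟩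

lemma Dt_inAdd (hsusp : SuspClosed S) (hx : InAdd S x) (hy : InAdd S y) (hz : InAdd S z)
    (n : ℕ) : InAdd S (Dt f u v n).obj₁ ∧ InAdd S (Dt f u v n).obj₂ ∧
      InAdd S (Dt f u v n).obj₃ := by
  induction n with
  | zero => exact ⟨hx, hy, hz⟩
  | succ n ih =>
    obtain ⟨h1, h2, h3⟩ := ih
    exact ⟨h2, h3, inAdd_shift 1 (fun c hc => (hsusp c hc).1) h1⟩

lemma Ob_inAdd (hsusp : SuspClosed S) (hx : InAdd S x) (hy : InAdd S y) (hz : InAdd S z) :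
    ∀ i : ℤ, InAdd S (Ob f u v i)
  | .ofNat 0 => hy
  | .ofNat (n + 1) => (Ut_inAdd f u v hsusp hx hy hz n).1
  | .negSucc n => (Dt_inAdd f u v hsusp hx hy hz (n + 1)).2.1

theorem mainFactor (hdist : Triangle.mk f u v ∈ distTriang T)
    (hproj : ∀ i : ℤ, Projective' (hC S (Ob f u v i))) (n : ℕ) :
    ∀ (Q : Mod' (SubC S)), IdimLE' n Q → ∀ (i : ℤ) (g : hC S (Ob f u v (i + 1)) ⟶ Q),
      hCmap S (δ f u v (i + 1)) ≫ g = 0 →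
      ∃ h : hC S (Ob f u v i) ⟶ Q, hCmap S (δ f u v i) ≫ h = g := by
  induction n with
  | zero =>
    intro Q hQ i g hg
    obtain ⟨w, hw⟩ := tri f u v hdist i
    exact injStep _ _ hw Q hQ g hg
  | succ n IH =>
    intro Q hQ i g hg
    rcases hQ with hQinj | ⟨I, Q', m₀, p₀, hI, hses, hQ'⟩
    · obtain ⟨w, hw⟩ := tri f u v hdist i
      exact injStep _ _ hw Q hQinj g hg
    obtain ⟨i', rfl⟩ : ∃ i', i = i' + 1 := ⟨i - 1, by omega⟩
    obtain ⟨m0mono, hexact, p0epi⟩ := hses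
    have hmp : m₀ ≫ p₀ = 0 := hom_ext' fun d xx => (hexact d).apply_apply_eq_zero xx
    obtain ⟨w1, hw1⟩ := tri f u v hdist (i' + 1)
    obtain ⟨h₁, hh₁⟩ := injStep _ _ hw1 I hI (g ≫ m₀)
      (by rw [← Category.assoc, hg, Limits.zero_comp])
    have hz2 : hCmap S (δ f u v (i' + 1)) ≫ (h₁ ≫ p₀) = 0 := by
      rw [← Category.assoc, hh₁, Category.assoc, hmp, Limits.comp_zero]
    obtain ⟨h₂, hh₂⟩ := IH Q' hQ' i' (h₁ ≫ p₀) hz2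
    obtain ⟨h₃, hh₃⟩ := hproj i' p₀ p0epi h₂
    have h₄p₀ : (h₁ - hCmap S (δ f u v i') ≫ h₃) ≫ p₀ = 0 := by
      rw [Preadditive.sub_comp, Category.assoc, hh₃, hh₂, sub_self]
    have hrange : ∀ d xx, ∃ yy, app' m₀ d yy
        = app' (h₁ - hCmap S (δ f u v i') ≫ h₃) d xx := by
      intro d xx
      have h0 : app' p₀ d (app' (h₁ - hCmap S (δ f u v i') ≫ h₃) d xx) = 0 := by
        rw [← app'_comp, h₄p₀, app'_zero]
      exact ((hexact d) _).mp h0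
    obtain ⟨h, hh⟩ := factorThruMono m₀ m0mono _ hrange
    refine ⟨h, mono'_cancel m0mono ?_⟩
    rw [Category.assoc, hh, Preadditive.comp_sub, hh₁, ← Category.assoc, ← hCmap_comp,
      δ_comp_zero f u v hdist i', hCmap_zero, Limits.zero_comp, sub_zero]
end Main
end Stmt11Aux
namespace Stmt11Aux
open CategoryTheory CategoryTheory.Limits CategoryTheory.Pretriangulated Stmt11
section Fin
variable {T : Type u} [Category.{v} T] [Preadditive T] [HasZeroObject T] [HasShift T ℤ]
  [∀ n : ℤ, (CategoryTheory.shiftFunctor T n).Additive] [Pretriangulated T] {S : Set T}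

theorem finFree_hC {X : T} (D : AddData S X) : FinFree (hC S D.Y) := by
  haveI : Inhabited (Fin D.n → SubC S) := ⟨fun i => ⟨D.c i, D.hc i⟩⟩
  let ci : Fin D.n → SubC S := fun i => ⟨D.c i, D.hc i⟩
  let L : ∀ i, repr' (ci i) ⟶ hC S D.Y := fun i =>
    mkHom (fun d => AddCommGrpCat.ofHom (AddMonoidHom.mk'
      (fun ψ => (show (Opposite.unop d).obj ⟶ D.c i from (ψ : Opposite.unop d ⟶ ci i).hom) ≫ D.ι i)
      (fun _ _ => Preadditive.add_comp _ _ _ _ _ _)))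
      (fun ρ ψ => Category.assoc _ _ _)
  -- the projections of an element
  let θ : ∀ (d : (SubC S)ᵒᵖ) (φ : (hC S D.Y).obj.obj d) (i : Fin D.n), Opposite.unop d ⟶ ci i :=
    fun d φ i => ObjectProperty.homMk (show (Opposite.unop d).obj ⟶ D.c i from
      (φ : (Opposite.unop d).obj ⟶ D.Y) ≫ D.π i)
  have θ_add : ∀ d φ φ' i, θ d (φ + φ') i = θ d φ i + θ d φ' i := by
    intro d φ φ' i
    apply ObjectProperty.hom_ext
    show ((φ : (Opposite.unop d).obj ⟶ D.Y) + φ') ≫ D.π i = _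
    exact Preadditive.add_comp _ _ _ _ _ _
  have θ_nat : ∀ {d d'} (ρ : d ⟶ d') (φ : (hC S D.Y).obj.obj d) i,
      θ d' ((hC S D.Y).obj.map ρ φ) i = ρ.unop ≫ θ d φ i := by
    intro d d' ρ φ i
    apply ObjectProperty.hom_ext
    show (ρ.unop.hom ≫
      (φ : (Opposite.unop d).obj ⟶ D.Y)) ≫ D.π i = _
    exact Category.assoc _ _ _
  have hdec : ∀ (d : (SubC S)ᵒᵖ) (φ : (hC S D.Y).obj.obj d),
      (φ : (Opposite.unop d).obj ⟶ D.Y) = ∑ i, ((θ d φ i).hom ≫ D.ι i :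
        (Opposite.unop d).obj ⟶ D.Y) := by
    intro d φ
    have h0 : ∀ i, ((θ d φ i).hom ≫ D.ι i : (Opposite.unop d).obj ⟶ D.Y)
        = (φ : (Opposite.unop d).obj ⟶ D.Y) ≫ D.π i ≫ D.ι i := fun i => Category.assoc _ _ _
    rw [Finset.sum_congr rfl (fun i _ => h0 i)]
    exact (Category.comp_id _).symm.trans ((congrArg (fun t => (φ : (Opposite.unop d).obj ⟶ D.Y) ≫ t)
      D.sum_π_ι.symm).trans (Preadditive.comp_sum _ _ _))
  refine ⟨D.n, ci, L, ⟨mkCofanColimit _ (fun t => mkHom (fun d => AddCommGrpCat.ofHom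
    (AddMonoidHom.mk' (fun φ => ∑ i, app' (t.inj i) d (θ d φ i)) ?_)) ?_) ?_ ?_⟩⟩
  · -- additivity of desc
    intro φ φ'
    rw [← Finset.sum_add_distrib]
    exact Finset.sum_congr rfl (fun i _ => (congrArg (fun a => app' (t.inj i) d a)
      (θ_add d φ φ' i)).trans (map_add _ _ _))
  · -- naturality of desc
    intro d d' ρ φ
    haveI : (t.pt).obj.Additive := (t.pt).property
    show ∑ i, app' (t.inj i) d' (θ d' ((hC S D.Y).obj.map ρ φ) i)
        = (t.pt).obj.map ρ (∑ i, app' (t.inj i) d (θ d φ i))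
    rw [map_sum]
    refine Finset.sum_congr rfl (fun i _ => ?_)
    rw [θ_nat]
    have : (ρ.unop ≫ θ d φ i : Opposite.unop d' ⟶ ci i)
        = (repr' (ci i)).obj.map ρ (θ d φ i) := rfl
    rw [this]; exact naturality' (t.inj i) _ _
  · -- fac
    intro t i
    apply hom_ext'
    intro d ψ
    rw [app'_comp]
    show ∑ j, app' (t.inj j) d (θ d (app' ((Cofan.mk (hC S D.Y) L).inj i) d ψ) j)
        = app' (t.inj i) d ψ
    have hθ : ∀ j, θ d (app' ((Cofan.mk (hC S D.Y) L).inj i) d ψ) j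
        = ObjectProperty.homMk (show (Opposite.unop d).obj ⟶ D.c j from
            ((ψ : Opposite.unop d ⟶ ci i).hom ≫ D.ι i) ≫ D.π j) := fun j => rfl
    rw [Finset.sum_congr rfl (fun j _ => by rw [hθ j])]
    rw [Finset.sum_eq_single i]
    · have : ObjectProperty.homMk (show (Opposite.unop d).obj ⟶ D.c i from
          ((ψ : Opposite.unop d ⟶ ci i).hom ≫ D.ι i) ≫ D.π i)
          = (ψ : Opposite.unop d ⟶ ci i) := by
        apply ObjectProperty.hom_ext
        show ((ψ : Opposite.unop d ⟶ ci i).hom ≫ D.ι i) ≫ D.π i = (ψ : Opposite.unop d ⟶ ci i).hom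
        rw [Category.assoc, D.ι_π, dif_pos rfl, eqToHom_refl]
        exact Category.comp_id _
      rw [this]
    · intro j _ hj
      have : ObjectProperty.homMk (show (Opposite.unop d).obj ⟶ D.c j from
          ((ψ : Opposite.unop d ⟶ ci i).hom ≫ D.ι i) ≫ D.π j)
          = (0 : Opposite.unop d ⟶ ci j) := by
        apply ObjectProperty.hom_ext
        show ((ψ : Opposite.unop d ⟶ ci i).hom ≫ D.ι i) ≫ D.π j = (0 : (Opposite.unop d).obj ⟶ D.c j)
        rw [Category.assoc, D.ι_π]
        rw [dif_neg (Ne.symm hj), Limits.comp_zero]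
      rw [this]; exact map_zero _
    · intro hi
      exact absurd (Finset.mem_univ i) hi
  · -- uniq
    intro t mm hmm
    apply hom_ext'
    intro d φ
    show app' mm d φ = ∑ i, app' (t.inj i) d (θ d φ i)
    have hsum : φ = ∑ i, (((θ d φ i).hom ≫ D.ι i : (Opposite.unop d).obj ⟶ D.Y) :
        (hC S D.Y).obj.obj d) := hdec d φ
    conv_lhs => rw [hsum]
    refine (map_sum _ _ _).trans ?_
    refine Finset.sum_congr rfl (fun i _ => ?_)
    have h1 : (((θ d φ i).hom ≫ D.ι i : (Opposite.unop d).obj ⟶ D.Y) : (hC S D.Y).obj.obj d)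
        = app' ((Cofan.mk (hC S D.Y) L).inj i) d (θ d φ i) := rfl
    rw [h1]
    exact (app'_comp _ _ _ _).symm.trans (congrArg (fun g => app' g d (θ d φ i)) (hmm i))

theorem epi'_hCmap_r {X : T} (D : AddData S X) : Epi' (hCmap S D.r) := by
  intro d χ
  refine ⟨(χ : (Opposite.unop d).obj ⟶ X) ≫ D.s, ?_⟩
  show ((χ : (Opposite.unop d).obj ⟶ X) ≫ D.s) ≫ D.r = (χ : (Opposite.unop d).obj ⟶ X)
  exact (Category.assoc _ _ _).trans ((congrArg _ D.hsr).trans (Category.comp_id _))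
end Fin
end Stmt11Aux

/-- Let `T` be a triangulated category and `C ⊆ T` (given by a set `S`
of objects) a small suspension-closed full subcategory such that `Mod C` is Gorenstein
and locally coherent.  If `x → y → z → Σx` is a distinguished triangle with all vertices
in the additive closure `add C`, then the image in `Mod C` of `h_C(x) → h_C(y)` is a
finitely generated Gorenstein projective `C`-module. -/
theorem image_of_triangle_in_addC_is_gproj
    {T : Type u} [Category.{v} T] [Preadditive T] [HasZeroObject T] [HasShift T ℤ]
    [∀ n : ℤ, (CategoryTheory.shiftFunctor T n).Additive] [Pretriangulated T]
    (S : Set T) (hsusp : SuspClosed S)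
    (hGor : IsGorensteinMod (SubC S)) (hcoh : LocallyCoherent (SubC S))
    {x y z : T} (f : x ⟶ y) (u : y ⟶ z) (v : z ⟶ x⟦(1 : ℤ)⟧)
    (hdist : Triangle.mk f u v ∈ distTriang T)
    (hx : InAdd S x) (hy : InAdd S y) (hz : InAdd S z)
    (M : Mod' (SubC S)) (e : hC S x ⟶ M) (m : M ⟶ hC S y)
    (he : Epi' e) (hm : Mono' m) (hfact : e ≫ m = hCmap S f) :
    FinGen M ∧ GProj' M := by
  constructor
  · -- finitely generated
    have D := Stmt11Aux.addData hx
    exact ⟨hC S D.Y, Stmt11Aux.finFree_hC D, hCmap S D.r ≫ e,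
      Stmt11Aux.epi'_comp (Stmt11Aux.epi'_hCmap_r D) he⟩
  · -- Gorenstein projective
    refine ⟨fun i => hC S (Stmt11Aux.Ob f u v i), fun i => hCmap S (Stmt11Aux.δ f u v i),
      fun i => Stmt11Aux.proj_hC (Stmt11Aux.Ob_inAdd f u v hsusp hx hy hz i), ?_, ?_, ?_⟩
    · -- exactness
      intro i d φ
      constructor
      · intro hφ
        obtain ⟨w, hw⟩ := Stmt11Aux.tri f u v hdist i
        obtain ⟨ψ, hψ⟩ := Triangle.coyoneda_exact₂ _ hw
          (φ : (Opposite.unop d).obj ⟶ Stmt11Aux.Ob f u v (i + 1)) hφ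
        exact ⟨ψ, hψ.symm⟩
      · rintro ⟨ψ, rfl⟩
        show ((ψ : (Opposite.unop d).obj ⟶ Stmt11Aux.Ob f u v (i + 1 + 1))
          ≫ Stmt11Aux.δ f u v (i + 1)) ≫ Stmt11Aux.δ f u v i = 0
        exact (Category.assoc _ _ _).trans ((congrArg _ (Stmt11Aux.δ_comp_zero f u v hdist i)).trans
          Limits.comp_zero)
    · -- total acyclicity against projectives
      intro Q hQ i g
      constructor
      · intro hg
        obtain ⟨nn, hnn⟩ := (hGor.1 Q).mp ⟨0, hQ⟩
        exact Stmt11Aux.mainFactor f u v hdist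
          (fun j => Stmt11Aux.proj_hC (Stmt11Aux.Ob_inAdd f u v hsusp hx hy hz j))
          nn Q hnn i g hg
      · rintro ⟨h, rfl⟩
        rw [← Category.assoc, ← Stmt11Aux.hCmap_comp,
          Stmt11Aux.δ_comp_zero f u v hdist i, Stmt11Aux.hCmap_zero, Limits.zero_comp]
    · exact ⟨e, m, he, hm, hfact⟩
end

section
/- Let R be a commutative noetherian ring, w ∈ R a non-zero-divisor, and (A, B) a matrix factorization of w: n×n matrices with AB = w·I_n = BA. Set U = R/(w). Then the 2-periodic complex ⋯ → U^n →^{B} U^n →^{A} U^n →^{B} U^n → ⋯ of free U-modules is acyclic and remains acyclic after applying Hom_U(−, U); consequently the U-module M = Im(A : U^n → U^n) is finitely generated Gorenstein projective. -/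
open CategoryTheory CategoryTheory.Limits

namespace Stmt18

/-- A module `M` over a ring `U` is *Gorenstein projective* if it admits a complete
projective resolution: a doubly infinite acyclic complex of projective modules, which
remains acyclic after applying `Hom(−, Q)` for every projective `Q`, having `M` as a
syzygy. -/
def IsGorensteinProjective (U : Type) [Ring U] (M : ModuleCat.{0} U) : Prop :=
  ∃ (P : ℤ → ModuleCat.{0} U) (d : ∀ i : ℤ, P (i + 1) ⟶ P i),
    (∀ i, Projective (P i)) ∧
    (∀ i : ℤ, Function.Exact (d (i + 1)) (d i)) ∧
    (∀ (Q : ModuleCat.{0} U), Projective Q → ∀ (i : ℤ) (g : P (i + 1) ⟶ Q),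
      (d (i + 1) ≫ g = 0 ↔ ∃ h : P i ⟶ Q, d i ≫ h = g)) ∧
    (∃ (e : P (0 + 1) ⟶ M) (m : M ⟶ P 0),
      Function.Surjective e ∧ Function.Injective m ∧ e ≫ m = d 0)

end Stmt18

open Stmt18


section Aux

variable {R : Type} [CommRing R] {n : ℕ} {w : R}

private lemma map_mulVec' (M : Matrix (Fin n) (Fin n) R) (v : Fin n → R) :
    (M.map (Ideal.Quotient.mk (Ideal.span {w}))).mulVec
      (fun i => Ideal.Quotient.mk (Ideal.span {w}) (v i))
      = fun i => Ideal.Quotient.mk (Ideal.span {w}) (M.mulVec v i) := by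
  funext i
  simp [Matrix.mulVec, dotProduct, Matrix.map_apply, map_sum]

private lemma mapAB_zero (A B : Matrix (Fin n) (Fin n) R)
    (hAB : A * B = w • (1 : Matrix (Fin n) (Fin n) R)) :
    (A.map (Ideal.Quotient.mk (Ideal.span {w}))) *
      (B.map (Ideal.Quotient.mk (Ideal.span {w}))) = 0 := by
  rw [← Matrix.map_mul, hAB]
  ext i j
  rw [Matrix.map_apply, Matrix.zero_apply, Ideal.Quotient.eq_zero_iff_mem,
    Matrix.smul_apply, smul_eq_mul]
  exact Ideal.mul_mem_right _ _ (Ideal.mem_span_singleton_self w)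

private lemma key (hw : w ∈ nonZeroDivisors R) (A B : Matrix (Fin n) (Fin n) R)
    (hBA : B * A = w • (1 : Matrix (Fin n) (Fin n) R))
    (x : Fin n → R ⧸ Ideal.span {w})
    (hx : (A.map (Ideal.Quotient.mk (Ideal.span {w}))).mulVec x = 0) :
    ∃ y, (B.map (Ideal.Quotient.mk (Ideal.span {w}))).mulVec y = x := by
  choose x0 hx0 using fun i => Ideal.Quotient.mk_surjective (x i)
  have hxx : x = fun i => Ideal.Quotient.mk (Ideal.span {w}) (x0 i) :=
    funext fun i => (hx0 i).symm
  rw [hxx, map_mulVec'] at hx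
  have hdvd : ∀ i, ∃ c, A.mulVec x0 i = w * c := by
    intro i
    have := congrFun hx i
    rw [Pi.zero_apply, Ideal.Quotient.eq_zero_iff_mem, Ideal.mem_span_singleton] at this
    exact this
  choose z hz using hdvd
  have h1 : B.mulVec (A.mulVec x0) = w • x0 := by
    rw [Matrix.mulVec_mulVec, hBA, Matrix.smul_mulVec, Matrix.one_mulVec]
  have h2 : B.mulVec (A.mulVec x0) = w • B.mulVec z := by
    have hAz : A.mulVec x0 = w • z := funext fun i => by
      rw [hz i]; simp
    rw [hAz, Matrix.mulVec_smul]
  have hx0z : x0 = B.mulVec z := by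
    funext i
    have := congrFun (h1.symm.trans h2) i
    simp only [Pi.smul_apply, smul_eq_mul] at this
    exact (mul_cancel_left_mem_nonZeroDivisors hw).mp this
  refine ⟨fun i => Ideal.Quotient.mk (Ideal.span {w}) (z i), ?_⟩
  rw [map_mulVec', hxx]
  funext i
  rw [hx0z]

end Aux

section Aux2

open Matrix

variable {R : Type} [CommRing R] {n : ℕ} {w : R}

private lemma exact_mulVecLin (hw : w ∈ nonZeroDivisors R) (A B : Matrix (Fin n) (Fin n) R)
    (hAB : A * B = w • (1 : Matrix (Fin n) (Fin n) R))
    (hBA : B * A = w • (1 : Matrix (Fin n) (Fin n) R)) :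
    Function.Exact (B.map (Ideal.Quotient.mk (Ideal.span {w}))).mulVecLin
      (A.map (Ideal.Quotient.mk (Ideal.span {w}))).mulVecLin := by
  intro x
  constructor
  · intro h
    obtain ⟨y, hy⟩ := key hw A B hBA x (by simpa [Matrix.mulVecLin_apply] using h)
    exact ⟨y, by simpa [Matrix.mulVecLin_apply] using hy⟩
  · rintro ⟨y, rfl⟩
    show ((A.map _).mulVecLin ∘ₗ (B.map _).mulVecLin) y = 0
    rw [← Matrix.mulVecLin_mul, mapAB_zero A B hAB]
    simp

private lemma dual_repr {U : Type} [CommRing U] (φ : (Fin n → U) →ₗ[U] U) (x : Fin n → U) :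
    φ x = (fun j => φ (fun k => if j = k then 1 else 0)) ⬝ᵥ x := by
  rw [LinearMap.pi_apply_eq_sum_univ φ x]
  simp [dotProduct, mul_comm]

private lemma exact_dual (hw : w ∈ nonZeroDivisors R) (A B : Matrix (Fin n) (Fin n) R)
    (hAB : A * B = w • (1 : Matrix (Fin n) (Fin n) R))
    (hBA : B * A = w • (1 : Matrix (Fin n) (Fin n) R)) :
    letI U := R ⧸ Ideal.span {w}
    Function.Exact
      (fun φ : (Fin n → U) →ₗ[U] U =>
        φ.comp (A.map (Ideal.Quotient.mk (Ideal.span {w}))).mulVecLin)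
      (fun φ : (Fin n → U) →ₗ[U] U =>
        φ.comp (B.map (Ideal.Quotient.mk (Ideal.span {w}))).mulVecLin) := by
  intro φ
  set U := R ⧸ Ideal.span {w}
  set A' := A.map (Ideal.Quotient.mk (Ideal.span {w})) with hA'
  set B' := B.map (Ideal.Quotient.mk (Ideal.span {w})) with hB'
  constructor
  · intro h
    set v : Fin n → U := fun j => φ (fun k => if j = k then 1 else 0) with hv
    have hv0 : (Bᵀ.map (Ideal.Quotient.mk (Ideal.span {w}))).mulVec v = 0 := by
      funext k
      have h1 : φ (B'.mulVec (fun l => if k = l then 1 else 0)) = 0 := by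
        have := LinearMap.congr_fun h (fun l => if k = l then (1:U) else 0)
        simpa using this
      rw [dual_repr] at h1
      rw [Pi.zero_apply, ← h1]
      simp [Matrix.mulVec, dotProduct, Matrix.transpose_apply, Matrix.map_apply,
        Finset.mul_sum, Finset.sum_ite_eq, mul_comm, hB', hv]
    obtain ⟨u, hu⟩ := key hw Bᵀ Aᵀ
      (by rw [← Matrix.transpose_mul, hBA, Matrix.transpose_smul, Matrix.transpose_one]) v hv0
    refine ⟨{ toFun := fun x => u ⬝ᵥ x,
              map_add' := fun a b => dotProduct_add u a b,
              map_smul' := fun c a => by simp [dotProduct_smul] }, ?_⟩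
    apply LinearMap.ext
    intro x
    show u ⬝ᵥ (A'.mulVec x) = φ x
    rw [Matrix.dotProduct_mulVec, dual_repr φ x, ← hv]
    have : u ᵥ* A' = v := by
      rw [← Matrix.mulVec_transpose]
      rw [hA', ← Matrix.transpose_map]
      exact hu
    rw [this]
  · rintro ⟨ψ, rfl⟩
    show ψ ∘ₗ A'.mulVecLin ∘ₗ B'.mulVecLin = 0
    rw [← Matrix.mulVecLin_mul, mapAB_zero A B hAB]
    simp

end Aux2

section Aux3

open Matrix

variable {R : Type} [CommRing R] {n : ℕ} {w : R}

private lemma solve_proj (hw : w ∈ nonZeroDivisors R) (A B : Matrix (Fin n) (Fin n) R)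
    (hAB : A * B = w • (1 : Matrix (Fin n) (Fin n) R))
    (Q : Type) [AddCommGroup Q] [Module (R ⧸ Ideal.span {w}) Q]
    (hQ : Module.Projective (R ⧸ Ideal.span {w}) Q)
    (g : (Fin n → R ⧸ Ideal.span {w}) →ₗ[R ⧸ Ideal.span {w}] Q)
    (hg : g ∘ₗ (A.map (Ideal.Quotient.mk (Ideal.span {w}))).mulVecLin = 0) :
    ∃ h : (Fin n → R ⧸ Ideal.span {w}) →ₗ[R ⧸ Ideal.span {w}] Q,
      h ∘ₗ (B.map (Ideal.Quotient.mk (Ideal.span {w}))).mulVecLin = g := by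
  classical
  set U := R ⧸ Ideal.span {w}
  set A' := A.map (Ideal.Quotient.mk (Ideal.span {w})) with hA'
  set B' := B.map (Ideal.Quotient.mk (Ideal.span {w})) with hB'
  obtain ⟨s, hs⟩ := Module.projective_def'.mp hQ
  set g' : (Fin n → U) →ₗ[U] (Q →₀ U) := s ∘ₗ g with hg'
  have hg'0 : g' ∘ₗ A'.mulVecLin = 0 := by
    rw [hg', LinearMap.comp_assoc, hg, LinearMap.comp_zero]
  set q : Fin n → (Q →₀ U) := fun j => g' (fun k => if j = k then 1 else 0) with hq
  -- the key pointwise identity: applying g' to a vector is a q-linear combination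
  have hrepr : ∀ x : Fin n → U, g' x = ∑ j, x j • q j := by
    intro x
    rw [LinearMap.pi_apply_eq_sum_univ g' x]
  -- each "coordinate slice" of q is killed by the transpose of A'
  have hslice : ∀ b : Q, (Aᵀ.map (Ideal.Quotient.mk (Ideal.span {w}))).mulVec
      (fun j => q j b) = 0 := by
    intro b
    funext k
    have h1 : g' (A'.mulVec (fun l => if k = l then 1 else 0)) = 0 := by
      have := LinearMap.congr_fun hg'0 (fun l => if k = l then (1:U) else 0)
      simpa using this
    have h2 : A'.mulVec (fun l => if k = l then 1 else 0) = fun j => A' j k := by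
      funext j
      simp [Matrix.mulVec, dotProduct]
    rw [h2, hrepr] at h1
    have h3 := congrFun (congrArg (fun f : Q →₀ U => (f : Q → U)) h1) b
    simp only [Finsupp.coe_finset_sum, Finset.sum_apply, Finsupp.coe_smul, Pi.smul_apply,
      smul_eq_mul, Finsupp.coe_zero, Pi.zero_apply] at h3
    rw [Pi.zero_apply]
    rw [← h3]
    simp [Matrix.mulVec, dotProduct, Matrix.transpose_apply, Matrix.map_apply, hA']
  -- solve each slice
  have hkey : ∀ b : Q, ∃ y : Fin n → U,
      (Bᵀ.map (Ideal.Quotient.mk (Ideal.span {w}))).mulVec y = fun j => q j b := by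
    intro b
    exact key hw Aᵀ Bᵀ
      (by rw [← Matrix.transpose_mul, hAB, Matrix.transpose_smul, Matrix.transpose_one])
      _ (hslice b)
  set u : Q → (Fin n → U) := fun b =>
    if hb : (fun j => q j b) = (0 : Fin n → U) then 0 else (hkey b).choose with hu
  have hu0 : ∀ b : Q, (∀ j, q j b = 0) → u b = 0 := by
    intro b hb
    show (if hb : (fun j => q j b) = (0 : Fin n → U) then 0 else (hkey b).choose) = 0
    exact dif_pos (funext hb)
  have huspec : ∀ b : Q, (Bᵀ.map (Ideal.Quotient.mk (Ideal.span {w}))).mulVec (u b)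
      = fun j => q j b := by
    intro b
    have : u b = (if hb : (fun j => q j b) = (0 : Fin n → U) then 0 else (hkey b).choose) := rfl
    rw [this]
    by_cases hb : (fun j => q j b) = (0 : Fin n → U)
    · rw [dif_pos hb, Matrix.mulVec_zero, hb]
    · rw [dif_neg hb]
      exact (hkey b).choose_spec
  set S : Finset Q := Finset.univ.biUnion (fun j : Fin n => (q j).support) with hS
  set p : Fin n → (Q →₀ U) := fun i => Finsupp.onFinset S (fun b => u b i) (by
    intro b hb
    by_contra hbS
    have : ∀ j, q j b = 0 := by
      intro j
      by_contra hqj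
      exact hbS (Finset.mem_biUnion.mpr ⟨j, Finset.mem_univ j, Finsupp.mem_support_iff.mpr hqj⟩)
    have hb' : u b i ≠ 0 := hb
    rw [hu0 b this] at hb'
    exact hb' rfl) with hp
  set H : (Fin n → U) →ₗ[U] (Q →₀ U) := (Pi.basisFun U (Fin n)).constr ℕ p with hH
  have hHx : ∀ x : Fin n → U, H x = ∑ i, x i • p i := by
    intro x
    rw [hH, Module.Basis.constr_apply_fintype]
    simp [Pi.basisFun_equivFun]
  have hcomp : H ∘ₗ B'.mulVecLin = g' := by
    apply LinearMap.ext
    intro x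
    rw [LinearMap.comp_apply, Matrix.mulVecLin_apply, hHx, hrepr]
    apply Finsupp.ext
    intro b
    simp only [Finsupp.coe_finset_sum, Finset.sum_apply, Finsupp.coe_smul, Pi.smul_apply,
      smul_eq_mul]
    have hpb : ∀ i, p i b = u b i := fun i => rfl
    calc ∑ i, (B'.mulVec x) i * p i b
        = ∑ i, (B'.mulVec x) i * u b i := by simp [hpb]
      _ = (B'.mulVec x) ⬝ᵥ u b := rfl
      _ = u b ⬝ᵥ (B'.mulVec x) := dotProduct_comm _ _
      _ = (u b ᵥ* B') ⬝ᵥ x := Matrix.dotProduct_mulVec _ _ _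
      _ = ((B'ᵀ).mulVec (u b)) ⬝ᵥ x := by rw [Matrix.mulVec_transpose]
      _ = (fun j => q j b) ⬝ᵥ x := by
          rw [hB', ← Matrix.transpose_map, huspec b]
      _ = ∑ j, x j * q j b := by simp [dotProduct, mul_comm]
  refine ⟨(Finsupp.linearCombination U id) ∘ₗ H, ?_⟩
  rw [LinearMap.comp_assoc, hcomp, hg', ← LinearMap.comp_assoc, hs, LinearMap.id_comp]

end Aux3

section Aux4

open Matrix ModuleCat

variable {R : Type} [CommRing R] {n : ℕ} {w : R}

private lemma gorenstein (hw : w ∈ nonZeroDivisors R) (A B : Matrix (Fin n) (Fin n) R)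
    (hAB : A * B = w • (1 : Matrix (Fin n) (Fin n) R))
    (hBA : B * A = w • (1 : Matrix (Fin n) (Fin n) R)) :
    IsGorensteinProjective (R ⧸ Ideal.span {w})
      (ModuleCat.of (R ⧸ Ideal.span {w})
        (LinearMap.range (A.map (Ideal.Quotient.mk (Ideal.span {w}))).mulVecLin)) := by
  classical
  set U := R ⧸ Ideal.span {w}
  set A' := A.map (Ideal.Quotient.mk (Ideal.span {w})) with hA'
  set B' := B.map (Ideal.Quotient.mk (Ideal.span {w})) with hB'
  refine ⟨fun _ => ModuleCat.of U (Fin n → U),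
    fun i => if Even i then ModuleCat.ofHom A'.mulVecLin else ModuleCat.ofHom B'.mulVecLin,
    fun i => ModuleCat.projective_of_free (Pi.basisFun U (Fin n)), ?_, ?_, ?_⟩
  · intro i
    rcases Int.even_or_odd i with he | ho
    · have h1 : ¬ Even (i + 1) := by simp [Int.even_add_one, he]
      beta_reduce
      rw [if_pos he, if_neg h1]
      exact exact_mulVecLin hw A B hAB hBA
    · have he : ¬ Even i := by simpa [Int.even_iff, Int.odd_iff] using ho
      have h1 : Even (i + 1) := Int.even_add_one.mpr he
      beta_reduce
      rw [if_neg he, if_pos h1]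
      exact exact_mulVecLin hw B A hBA hAB
  · intro Q hQ i g
    have hQ' : Module.Projective U Q :=
      (IsProjective.iff_projective Q).mpr hQ
    rcases Int.even_or_odd i with he | ho
    · have h1 : ¬ Even (i + 1) := by simp [Int.even_add_one, he]
      beta_reduce
      rw [if_pos he, if_neg h1]
      constructor
      · intro h0
        have h0' : g.hom ∘ₗ B'.mulVecLin = 0 := congrArg ModuleCat.Hom.hom h0
        obtain ⟨h, hh⟩ := solve_proj hw B A hBA Q hQ' g.hom h0'
        exact ⟨ModuleCat.ofHom h, ModuleCat.hom_ext hh⟩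
      · rintro ⟨h, hh⟩
        have hh' : h.hom ∘ₗ A'.mulVecLin = g.hom := congrArg ModuleCat.Hom.hom hh
        apply ModuleCat.hom_ext
        show g.hom ∘ₗ B'.mulVecLin = 0
        rw [← hh', LinearMap.comp_assoc, ← Matrix.mulVecLin_mul, mapAB_zero A B hAB]
        simp
    · have he : ¬ Even i := by simpa [Int.even_iff, Int.odd_iff] using ho
      have h1 : Even (i + 1) := Int.even_add_one.mpr he
      beta_reduce
      rw [if_neg he, if_pos h1]
      constructor
      · intro h0
        have h0' : g.hom ∘ₗ A'.mulVecLin = 0 := congrArg ModuleCat.Hom.hom h0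
        obtain ⟨h, hh⟩ := solve_proj hw A B hAB Q hQ' g.hom h0'
        exact ⟨ModuleCat.ofHom h, ModuleCat.hom_ext hh⟩
      · rintro ⟨h, hh⟩
        have hh' : h.hom ∘ₗ B'.mulVecLin = g.hom := congrArg ModuleCat.Hom.hom hh
        apply ModuleCat.hom_ext
        show g.hom ∘ₗ A'.mulVecLin = 0
        rw [← hh', LinearMap.comp_assoc, ← Matrix.mulVecLin_mul, mapAB_zero B A hBA]
        simp
  · refine ⟨ModuleCat.ofHom A'.mulVecLin.rangeRestrict,
      ModuleCat.ofHom (LinearMap.range A'.mulVecLin).subtype,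
      LinearMap.surjective_rangeRestrict _, Submodule.injective_subtype _, ?_⟩
    have h0 : Even ((0 : ℤ) + 1) = False := by simp [Int.even_add_one]
    beta_reduce
    rw [if_pos (Even.zero (α := ℤ))]
    exact ModuleCat.hom_ext (LinearMap.subtype_comp_codRestrict _ _ _)

end Aux4


/-- Let `R` be a commutative noetherian ring, `w` a non-zero-divisor and
`(A, B)` a matrix factorization of `w` (`A * B = w • 1 = B * A`).  Over `U = R/(w)` the
2-periodic complex `⋯ → Uⁿ → Uⁿ → Uⁿ → ⋯` with differentials alternately given by the
reductions `A'`, `B'` of `A`, `B` is acyclic and remains acyclic after applying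
`Hom_U(−, U)`; consequently `M = Im(A' : Uⁿ → Uⁿ)` is a finitely generated Gorenstein
projective `U`-module. -/
theorem matrix_factorization_gorenstein_projective
    (R : Type) [CommRing R] [IsNoetherianRing R] (w : R) (hw : w ∈ nonZeroDivisors R)
    (n : ℕ) (A B : Matrix (Fin n) (Fin n) R)
    (hAB : A * B = w • (1 : Matrix (Fin n) (Fin n) R))
    (hBA : B * A = w • (1 : Matrix (Fin n) (Fin n) R)) :
    letI U := R ⧸ Ideal.span {w}
    letI A' : Matrix (Fin n) (Fin n) U := A.map (Ideal.Quotient.mk (Ideal.span {w}))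
    letI B' : Matrix (Fin n) (Fin n) U := B.map (Ideal.Quotient.mk (Ideal.span {w}))
    -- the 2-periodic complex is acyclic:
    (Function.Exact B'.mulVecLin A'.mulVecLin ∧ Function.Exact A'.mulVecLin B'.mulVecLin) ∧
    -- it remains acyclic after applying `Hom_U(−, U)`:
    (Function.Exact
        (fun φ : (Fin n → U) →ₗ[U] U => φ.comp A'.mulVecLin)
        (fun φ : (Fin n → U) →ₗ[U] U => φ.comp B'.mulVecLin) ∧
      Function.Exact
        (fun φ : (Fin n → U) →ₗ[U] U => φ.comp B'.mulVecLin)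
        (fun φ : (Fin n → U) →ₗ[U] U => φ.comp A'.mulVecLin)) ∧
    -- the image of `A'` is a finitely generated Gorenstein projective module:
    Module.Finite U (LinearMap.range A'.mulVecLin) ∧
    IsGorensteinProjective U (ModuleCat.of U (LinearMap.range A'.mulVecLin)) := by
  refine ⟨⟨exact_mulVecLin hw A B hAB hBA, exact_mulVecLin hw B A hBA hAB⟩,
    ⟨exact_dual hw A B hAB hBA, exact_dual hw B A hBA hAB⟩,
    inferInstance, gorenstein hw A B hAB hBA⟩
end
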